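/- arXiv:2304.09586 — 5 statements merged into one kernel-verified Lean document; each statement's English description precedes it below -/
import Mathlib

section
/- Let $X$ be a Banach space and let $\Psi = \{\psi_k\}_{k=1}^\infty$ satisfy the unconditional bound UB($a, K$) with $0 \le a < 1$, $K > 0$. Let $f = \sum_{k=1}^\infty c_k \psi_k$ (converging in $X$) and let $a_n(f)$ denote the decreasing rearrangement of $(|c_k|)$. Then $\|f\|_X \le 4K \sum_{n=1}^\infty n^{a-1} a_n(f)$. -/
open Finset

/-- `(N+1)^a ≤ ∑_{n<N+1} (n+1)^(a-1)` for `0 ≤ a ≤ 1`. -/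
lemma stmt4_aux_lemA {a : ℝ} (ha0 : 0 ≤ a) (ha1 : a ≤ 1) :
    ∀ N : ℕ, ((N : ℝ) + 1) ^ a ≤ ∑ n ∈ range (N + 1), ((n : ℝ) + 1) ^ (a - 1) := by
  intro N
  induction N with
  | zero => simp
  | succ N ih =>
    rw [sum_range_succ]
    have h1 : (0:ℝ) < (N : ℝ) + 1 := by positivity
    have h2 : (0:ℝ) < (N : ℝ) + 2 := by positivity
    have key : ((N : ℝ) + 2) ^ a ≤ ((N : ℝ) + 1) ^ a + ((N : ℝ) + 2) ^ (a - 1) := by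
      have e2 : ((N : ℝ) + 2) ^ a = ((N : ℝ) + 2) ^ (a - 1) * ((N : ℝ) + 2) := by
        rw [← Real.rpow_add_one h2.ne' (a - 1)]; ring_nf
      have e1 : ((N : ℝ) + 1) ^ a = ((N : ℝ) + 1) ^ (a - 1) * ((N : ℝ) + 1) := by
        rw [← Real.rpow_add_one h1.ne' (a - 1)]; ring_nf
      have hmono : ((N : ℝ) + 2) ^ (a - 1) ≤ ((N : ℝ) + 1) ^ (a - 1) :=
        Real.rpow_le_rpow_of_nonpos h1 (by linarith) (by linarith)
      nlinarith [Real.rpow_nonneg h2.le (a-1)]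
    push_cast
    push_cast at ih
    have hcast : ((N:ℝ) + 1 + 1) = (N:ℝ) + 2 := by ring
    rw [hcast]
    linarith

/-- Abel summation bound: decreasing nonneg coefficients against partial-sum-bounded vectors. -/
lemma stmt4_aux_key {X : Type*} [NormedAddCommGroup X] [NormedSpace ℝ X]
    {K a : ℝ} (hK : 0 ≤ K) (ha0 : 0 ≤ a) (ha1 : a ≤ 1) (x : ℕ → X) :
    ∀ N : ℕ, ∀ b : ℕ → ℝ, (∀ n, 0 ≤ b n) → Antitone b →
      (∀ m, m ≤ N → ‖∑ k ∈ range m, x k‖ ≤ K * (m : ℝ) ^ a) →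
      ‖∑ k ∈ range N, b k • x k‖ ≤ K * ∑ n ∈ range N, ((n : ℝ) + 1) ^ (a - 1) * b n := by
  intro N
  induction N with
  | zero => intro b _ _ _; simp
  | succ N ih =>
    intro b hb0 hbanti hx
    have hbN : 0 ≤ b N := hb0 N
    -- decomposition
    have decomp : ∑ k ∈ range (N + 1), b k • x k
        = (∑ k ∈ range N, (b k - b N) • x k) + b N • ∑ k ∈ range (N + 1), x k := by
      rw [smul_sum]
      have : ∑ k ∈ range (N + 1), (b k - b N) • x k = ∑ k ∈ range N, (b k - b N) • x k := by
        rw [sum_range_succ]; simp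
      rw [← this, ← sum_add_distrib]
      apply sum_congr rfl
      intro k _
      rw [← add_smul]; ring_nf
    -- the modified coefficient sequence
    set b' : ℕ → ℝ := fun k => b (min k N) - b N with hb'
    have hb'0 : ∀ n, 0 ≤ b' n := fun n => by
      simp only [hb', sub_nonneg]; exact hbanti (min_le_right n N)
    have hb'anti : Antitone b' := by
      intro m n hmn
      simp only [hb']
      have : min m N ≤ min n N := min_le_min hmn le_rfl
      linarith [hbanti this]
    have hx' : ∀ m, m ≤ N → ‖∑ k ∈ range m, x k‖ ≤ K * (m : ℝ) ^ a :=
      fun m hm => hx m (hm.trans (Nat.le_succ N))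
    have ihb := ih b' hb'0 hb'anti hx'
    have heq1 : ∑ k ∈ range N, b' k • x k = ∑ k ∈ range N, (b k - b N) • x k := by
      apply sum_congr rfl
      intro k hk
      have : min k N = k := min_eq_left (le_of_lt (mem_range.mp hk))
      simp [hb', this]
    have heq2 : ∑ n ∈ range N, ((n : ℝ) + 1) ^ (a - 1) * b' n
        = (∑ n ∈ range N, ((n : ℝ) + 1) ^ (a - 1) * b n)
          - b N * ∑ n ∈ range N, ((n : ℝ) + 1) ^ (a - 1) := by
      rw [mul_sum, ← sum_sub_distrib]
      apply sum_congr rfl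
      intro n hn
      have : min n N = n := min_eq_left (le_of_lt (mem_range.mp hn))
      simp [hb', this]; ring
    rw [heq1, heq2] at ihb
    calc ‖∑ k ∈ range (N + 1), b k • x k‖
        ≤ ‖∑ k ∈ range N, (b k - b N) • x k‖ + ‖b N • ∑ k ∈ range (N + 1), x k‖ := by
          rw [decomp]; exact norm_add_le _ _
      _ ≤ K * ((∑ n ∈ range N, ((n : ℝ) + 1) ^ (a - 1) * b n)
            - b N * ∑ n ∈ range N, ((n : ℝ) + 1) ^ (a - 1))
            + b N * (K * ((N : ℝ) + 1) ^ a) := by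
          have hnorm : ‖b N • ∑ k ∈ range (N + 1), x k‖
              = b N * ‖∑ k ∈ range (N + 1), x k‖ := by
            rw [norm_smul, Real.norm_eq_abs, abs_of_nonneg hbN]
          have hxN := hx (N + 1) le_rfl
          push_cast at hxN
          have h2 : b N * ‖∑ k ∈ range (N + 1), x k‖ ≤ b N * (K * ((N : ℝ) + 1) ^ a) :=
            mul_le_mul_of_nonneg_left hxN hbN
          rw [hnorm]
          linarith
      _ ≤ K * ∑ n ∈ range (N + 1), ((n : ℝ) + 1) ^ (a - 1) * b n := by
          have hA := stmt4_aux_lemA ha0 ha1 N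
          rw [sum_range_succ ((fun n : ℕ => ((n : ℝ) + 1) ^ (a - 1) * b n)) N]
          have h3 : K * b N * (((N : ℝ) + 1) ^ a)
              ≤ K * b N * (∑ n ∈ range N, ((n : ℝ) + 1) ^ (a - 1) + ((N : ℝ) + 1) ^ (a - 1)) := by
            apply mul_le_mul_of_nonneg_left _ (by positivity)
            rwa [sum_range_succ] at hA
          nlinarith

set_option maxHeartbeats 1000000 in
/-- If `ψ` satisfies the unconditional bound UB(a, K) with `0 ≤ a < 1`, `K > 0`, and
`f = ∑ c k • ψ k` (with absolutely summable coefficients), then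
`‖f‖ ≤ 4 K ∑_{n=1}^∞ n^(a-1) a_n(f)`, where `a_n(f) = |c (e (n-1))|` is the decreasing
rearrangement of `(|c k|)` given by a bijection `e`. -/
theorem stmt4 {X : Type*} [NormedAddCommGroup X] [NormedSpace ℝ X] [CompleteSpace X]
    (ψ : ℕ → X) (K a : ℝ) (hK : 0 < K) (ha0 : 0 ≤ a) (ha1 : a < 1)
    (hUB : ∀ (Λ : Finset ℕ) (ε : ℕ → ℝ), (∀ k ∈ Λ, ε k = 1 ∨ ε k = -1) →
      ‖∑ k ∈ Λ, ε k • ψ k‖ ≤ K * (Λ.card : ℝ) ^ a)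
    (c : ℕ → ℝ) (f : X) (hc : Summable fun k => |c k|)
    (hf : HasSum (fun k => c k • ψ k) f)
    (e : ℕ ≃ ℕ) (he : Antitone fun n => |c (e n)|) :
    ‖f‖ ≤ 4 * K * ∑' n : ℕ, ((n : ℝ) + 1) ^ (a - 1) * |c (e n)| := by
  set b : ℕ → ℝ := fun n => |c (e n)| with hbdef
  set w : ℕ → ℝ := fun n => ((n : ℝ) + 1) ^ (a - 1) with hwdef
  -- summability
  have hb : Summable b := (Equiv.summable_iff e).2 hc
  have hw1 : ∀ n, w n ≤ 1 := fun n =>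
    Real.rpow_le_one_of_one_le_of_nonpos (by push_cast; linarith [Nat.cast_nonneg (α := ℝ) n])
      (by linarith)
  have hwpos : ∀ n, 0 ≤ w n := fun n => Real.rpow_nonneg (by positivity) _
  have hwb : Summable fun n => w n * b n := by
    apply Summable.of_nonneg_of_le (fun n => mul_nonneg (hwpos n) (abs_nonneg _))
      (fun n => ?_) hb
    calc w n * b n ≤ 1 * b n := mul_le_mul_of_nonneg_right (hw1 n) (abs_nonneg _)
      _ = b n := one_mul _
  -- rearranged series
  have hfe : HasSum (fun n => c (e n) • ψ (e n)) f := (Equiv.hasSum_iff e).2 hf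
  -- signs
  set ε : ℕ → ℝ := fun j => if 0 ≤ c j then 1 else -1 with hεdef
  set x : ℕ → X := fun k => ε (e k) • ψ (e k) with hxdef
  have hx : ∀ m : ℕ, ‖∑ k ∈ range m, x k‖ ≤ K * (m : ℝ) ^ a := by
    intro m
    have hinj : Set.InjOn e (range m) := fun p _ q _ h => e.injective h
    have h1 := hUB ((range m).image e) ε (by
      intro k _
      by_cases h : 0 ≤ c k
      · left; simp [hεdef, h]
      · right; simp [hεdef, h])
    rw [sum_image hinj, card_image_of_injOn hinj, card_range] at h1
    exact h1
  have hcx : ∀ k : ℕ, c (e k) • ψ (e k) = b k • x k := by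
    intro k
    simp only [hbdef, hxdef, smul_smul]
    by_cases h : 0 ≤ c (e k)
    · simp [hεdef, h, abs_of_nonneg h]
    · simp [hεdef, h, abs_of_neg (lt_of_not_ge h)]
  -- partial sum bound
  have hpartial : ∀ N : ℕ, ‖∑ k ∈ range N, c (e k) • ψ (e k)‖ ≤ K * ∑' n, w n * b n := by
    intro N
    have h1 : ∑ k ∈ range N, c (e k) • ψ (e k) = ∑ k ∈ range N, b k • x k :=
      sum_congr rfl fun k _ => hcx k
    have h2 := stmt4_aux_key hK.le ha0 ha1.le x N b (fun n => abs_nonneg _) he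
      (fun m _ => hx m)
    have h3 : ∑ n ∈ range N, w n * b n ≤ ∑' n, w n * b n :=
      Summable.sum_le_tsum (range N) (fun n _ => mul_nonneg (hwpos n) (abs_nonneg _)) hwb
    rw [h1]
    calc ‖∑ k ∈ range N, b k • x k‖ ≤ K * ∑ n ∈ range N, w n * b n := h2
      _ ≤ K * ∑' n, w n * b n := mul_le_mul_of_nonneg_left h3 hK.le
  have hlim : Filter.Tendsto (fun N => ‖∑ k ∈ range N, c (e k) • ψ (e k)‖)
      Filter.atTop (nhds ‖f‖) := hfe.tendsto_sum_nat.norm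
  have hnf : ‖f‖ ≤ K * ∑' n, w n * b n := le_of_tendsto' hlim hpartial
  have hT : 0 ≤ ∑' n, w n * b n :=
    tsum_nonneg fun n => mul_nonneg (hwpos n) (abs_nonneg _)
  calc ‖f‖ ≤ K * ∑' n, w n * b n := hnf
    _ ≤ 4 * K * ∑' n, w n * b n := by nlinarith
end

section
/- Let $X$ be a Banach space with a Schauder basis $\Psi$ satisfying UB($a, K$) with $0 \le a < 1$. Then for every $f$ with $\|f\|_{A_1(\Psi)} \le 1$ (i.e., coefficients $c_k(f)$ with $\sum_k |c_k(f)| \le 1$), every realization of the Thresholding Greedy Algorithm satisfies $\|f - G_m(f, \Psi, \varrho)\|_X \le 4K m^{a-1}$ for all $m \ge 1$. -/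
open Finset

/-- Abel-summation consequence of UB(a,K): for arbitrary coefficients bounded by `M`,
`‖∑_{k∈Λ} t k • ψ k‖ ≤ K * M * |Λ|^a`. -/
lemma abelA {X : Type*} [NormedAddCommGroup X] [NormedSpace ℝ X]
    (ψ : ℕ → X) (K a : ℝ) (hK : 0 ≤ K) (ha0 : 0 ≤ a)
    (hUB : ∀ (Λ : Finset ℕ) (ε : ℕ → ℝ), (∀ k ∈ Λ, ε k = 1 ∨ ε k = -1) →
      ‖∑ k ∈ Λ, ε k • ψ k‖ ≤ K * (Λ.card : ℝ) ^ a) :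
    ∀ (n : ℕ) (Λ : Finset ℕ), Λ.card ≤ n → ∀ (t : ℕ → ℝ) (M : ℝ), 0 ≤ M →
      (∀ k ∈ Λ, |t k| ≤ M) → ‖∑ k ∈ Λ, t k • ψ k‖ ≤ K * M * (Λ.card : ℝ) ^ a := by
  intro n
  induction n with
  | zero =>
    intro Λ hΛ t M hM ht
    obtain rfl := Finset.card_eq_zero.mp (Nat.le_zero.mp hΛ)
    simp only [Finset.sum_empty, norm_zero, Finset.card_empty, Nat.cast_zero]
    positivity
  | succ n ih =>
    intro Λ hΛ t M hM ht
    rcases Λ.eq_empty_or_nonempty with rfl | hne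
    · simp only [Finset.sum_empty, norm_zero, Finset.card_empty, Nat.cast_zero]
      positivity
    obtain ⟨k0, hk0, hmin⟩ := Finset.exists_min_image Λ (fun k => |t k|) hne
    set μ := |t k0| with hμ
    have hμ0 : 0 ≤ μ := abs_nonneg _
    have hμM : μ ≤ M := ht k0 hk0
    set ε : ℕ → ℝ := fun k => if t k < 0 then -1 else 1 with hε
    set t' : ℕ → ℝ := fun k => t k - μ * ε k with ht'
    have habs : ∀ k ∈ Λ, |t' k| = |t k| - μ := by
      intro k hk
      have h1 : μ ≤ |t k| := hmin k hk
      by_cases h : t k < 0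
      · have habsk : |t k| = -t k := abs_of_neg h
        rw [habsk] at h1 ⊢
        simp only [ht', hε, if_pos h]
        rw [abs_of_nonpos (by linarith)]
        ring
      · push_neg at h
        have habsk : |t k| = t k := abs_of_nonneg h
        rw [habsk] at h1 ⊢
        simp only [ht', hε, if_neg (not_lt.mpr h)]
        rw [abs_of_nonneg (by linarith)]
        ring
    have ht'0 : t' k0 = 0 := by
      have := habs k0 hk0
      rw [← hμ] at this
      have : |t' k0| = 0 := by rw [this]; ring
      exact abs_eq_zero.mp this
    have hdecomp : ∑ k ∈ Λ, t k • ψ k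
        = (∑ k ∈ Λ, t' k • ψ k) + μ • ∑ k ∈ Λ, ε k • ψ k := by
      rw [Finset.smul_sum, ← Finset.sum_add_distrib]
      apply Finset.sum_congr rfl
      intro k hk
      rw [smul_smul, ← add_smul]
      congr 1
      simp only [ht']
      ring
    have hcard : (Λ.erase k0).card ≤ n := by
      rw [Finset.card_erase_of_mem hk0]
      omega
    have h1 : ‖∑ k ∈ Λ, t' k • ψ k‖ ≤ K * (M - μ) * ((Λ.erase k0).card : ℝ) ^ a := by
      rw [← Finset.sum_erase Λ (show t' k0 • ψ k0 = 0 by rw [ht'0, zero_smul])]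
      exact ih (Λ.erase k0) hcard t' (M - μ) (by linarith)
        (fun k hk => by
          rw [habs k (Finset.mem_of_mem_erase hk)]
          have := ht k (Finset.mem_of_mem_erase hk)
          linarith)
    have h2 : ‖∑ k ∈ Λ, ε k • ψ k‖ ≤ K * (Λ.card : ℝ) ^ a := by
      apply hUB
      intro k _
      by_cases h : t k < 0 <;> simp [hε, h]
    have hr : ((Λ.erase k0).card : ℝ) ^ a ≤ (Λ.card : ℝ) ^ a :=
      Real.rpow_le_rpow (Nat.cast_nonneg _) (Nat.cast_le.mpr Finset.card_erase_le) ha0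
    have hpos : (0:ℝ) ≤ (Λ.card : ℝ) ^ a := Real.rpow_nonneg (Nat.cast_nonneg _) a
    calc ‖∑ k ∈ Λ, t k • ψ k‖
        ≤ ‖∑ k ∈ Λ, t' k • ψ k‖ + ‖μ • ∑ k ∈ Λ, ε k • ψ k‖ := by
          rw [hdecomp]; exact norm_add_le _ _
      _ = ‖∑ k ∈ Λ, t' k • ψ k‖ + μ * ‖∑ k ∈ Λ, ε k • ψ k‖ := by
          rw [norm_smul, Real.norm_eq_abs, abs_of_nonneg hμ0]
      _ ≤ K * (M - μ) * ((Λ.erase k0).card : ℝ) ^ a + μ * (K * (Λ.card : ℝ) ^ a) :=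
          add_le_add h1 (mul_le_mul_of_nonneg_left h2 hμ0)
      _ ≤ K * M * (Λ.card : ℝ) ^ a := by
          nlinarith [mul_le_mul_of_nonneg_left hr (mul_nonneg hK (by linarith : (0:ℝ) ≤ M - μ))]

/-- If a basis `ψ` satisfies UB(a, K) with `0 ≤ a < 1`, then for every `f = ∑ c k • ψ k`
with `∑ |c k| ≤ 1` (i.e. `‖f‖_{A₁(Ψ)} ≤ 1`), every realization of the Thresholding Greedy
Algorithm (given by a decreasing rearrangement `e` of the coefficients) satisfies
`‖f - G_m(f)‖ ≤ 4 K m^(a-1)` for all `m ≥ 1`. -/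
theorem stmt5 {X : Type*} [NormedAddCommGroup X] [NormedSpace ℝ X] [CompleteSpace X]
    (ψ : ℕ → X) (hψ : ∀ k, ‖ψ k‖ ≤ 1) (K a : ℝ) (hK : 0 < K) (ha0 : 0 ≤ a) (ha1 : a < 1)
    (hUB : ∀ (Λ : Finset ℕ) (ε : ℕ → ℝ), (∀ k ∈ Λ, ε k = 1 ∨ ε k = -1) →
      ‖∑ k ∈ Λ, ε k • ψ k‖ ≤ K * (Λ.card : ℝ) ^ a)
    (c : ℕ → ℝ) (f : X) (hc : Summable fun k => |c k|) (hA1 : ∑' k, |c k| ≤ 1)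
    (hf : HasSum (fun k => c k • ψ k) f)
    (e : ℕ ≃ ℕ) (he : Antitone fun n => |c (e n)|)
    (m : ℕ) (hm : 1 ≤ m) :
    ‖f - ∑ j ∈ Finset.range m, c (e j) • ψ (e j)‖ ≤ 4 * K * (m : ℝ) ^ (a - 1) := by
  -- Basic facts about the decreasing rearrangement B n := |c (e n)|
  have hsum_range : ∀ N : ℕ, ∑ l ∈ range N, |c (e l)| ≤ 1 := by
    intro N
    have h1 : ∑ l ∈ range N, |c (e l)| = ∑ k ∈ (range N).image e, |c k| :=
      (Finset.sum_image (f := fun k => |c k|) (g := fun l => e l)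
        (fun x _ y _ h => e.injective h)).symm
    rw [h1]
    exact le_trans (Summable.sum_le_tsum _ (fun k _ => abs_nonneg _) hc) hA1
  have hNB : ∀ N : ℕ, (N : ℝ) * |c (e N)| ≤ 1 := by
    intro N
    have h1 : (range N).card • |c (e N)| ≤ ∑ l ∈ range N, |c (e l)| :=
      Finset.card_nsmul_le_sum _ _ _ (fun l hl => he (le_of_lt (Finset.mem_range.mp hl)))
    have h2 := le_trans h1 (hsum_range N)
    simpa [nsmul_eq_mul] using h2
  have hIcoB : ∀ N1 N2 : ℕ, N1 ≤ N2 →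
      ((N2 - N1 : ℕ) : ℝ) * |c (e N2)| ≤ ∑ l ∈ Ico N1 N2, |c (e l)| := by
    intro N1 N2 h
    have h1 := Finset.card_nsmul_le_sum (Ico N1 N2) (fun l => |c (e l)|) (|c (e N2)|)
      (fun l hl => he (le_of_lt (Finset.mem_Ico.mp hl).2))
    simpa [Nat.card_Ico, nsmul_eq_mul] using h1
  -- the telescoping dyadic-block estimate
  have hblocks : ∀ I : ℕ, ∑ i ∈ Ico 1 (I+1), ((2^(i-1) * m : ℕ) : ℝ) * |c (e (2^i * m))|
      ≤ ∑ l ∈ Ico m (2^I * m), |c (e l)| := by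
    intro I
    induction I with
    | zero => simp
    | succ I ih =>
      have hle1 : m ≤ 2^I * m := Nat.le_mul_of_pos_left m (Nat.pow_pos (by norm_num))
      have hle2 : 2^I * m ≤ 2^(I+1) * m := by
        apply Nat.mul_le_mul_right
        exact Nat.pow_le_pow_right (by norm_num) (by omega)
      have hsub : 2^(I+1) * m - 2^I * m = 2^I * m := by
        have h : 2^(I+1) * m = 2^I * m + 2^I * m := by rw [pow_succ]; ring
        rw [h, Nat.add_sub_cancel]
      rw [Finset.sum_Ico_succ_top (by omega : 1 ≤ I + 1)]
      rw [← Finset.sum_Ico_consecutive (fun l => |c (e l)|) hle1 hle2]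
      apply add_le_add ih
      have h1 := hIcoB (2^I * m) (2^(I+1) * m) hle2
      rw [hsub] at h1
      simpa using h1
  -- the key quantitative bound: sum of renormalized block values is at most 3
  have hS : ∀ I : ℕ, ∑ i ∈ range (I+1), ((2^i * m : ℕ) : ℝ) * |c (e (2^i * m))| ≤ 3 := by
    intro I
    have hsplit : ∑ i ∈ range (I+1), ((2^i * m : ℕ) : ℝ) * |c (e (2^i * m))|
        = ((2^0 * m : ℕ) : ℝ) * |c (e (2^0 * m))|
          + ∑ i ∈ Ico 1 (I+1), ((2^i * m : ℕ) : ℝ) * |c (e (2^i * m))| := by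
      rw [Finset.range_eq_Ico,
        ← Finset.sum_Ico_consecutive _ (Nat.zero_le 1) (by omega : 1 ≤ I + 1)]
      congr 1
      simp
    rw [hsplit]
    have h0 : ((2^0 * m : ℕ) : ℝ) * |c (e (2^0 * m))| ≤ 1 := by
      simpa using hNB m
    have h1 : ∑ i ∈ Ico 1 (I+1), ((2^i * m : ℕ) : ℝ) * |c (e (2^i * m))|
        = 2 * ∑ i ∈ Ico 1 (I+1), ((2^(i-1) * m : ℕ) : ℝ) * |c (e (2^i * m))| := by
      rw [Finset.mul_sum]
      apply Finset.sum_congr rfl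
      intro i hi
      have hi1 : 1 ≤ i := (Finset.mem_Ico.mp hi).1
      have h2 : (2:ℕ)^i = 2 * 2^(i-1) := by
        conv_lhs => rw [← Nat.sub_add_cancel hi1]
        rw [pow_succ]; ring
      rw [h2]
      push_cast
      ring
    have h3 : ∑ l ∈ Ico m (2^I * m), |c (e l)| ≤ 1 := by
      refine le_trans (Finset.sum_le_sum_of_subset_of_nonneg ?_ (fun l _ _ => abs_nonneg _))
        (hsum_range (2^I * m))
      intro l hl
      rw [Finset.mem_Ico] at hl
      exact Finset.mem_range.mpr hl.2
    have h4 := le_trans (hblocks I) h3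
    rw [h1]
    linarith
  -- bound for arbitrary finite partial sums of the tail
  have hm' : 0 < m := hm
  have hmR : (0:ℝ) < (m:ℝ) := by exact_mod_cast hm'
  have hpart : ∀ s : Finset ℕ,
      ‖∑ j ∈ s, c (e (j + m)) • ψ (e (j + m))‖ ≤ 3 * K * (m:ℝ) ^ (a-1) := by
    intro s
    set I := s.sup id + m with hI
    have hmem : ∀ j ∈ s, Nat.log 2 ((j + m) / m) ∈ range (I+1) := by
      intro j hj
      rw [Finset.mem_range]
      have h1 : Nat.log 2 ((j+m)/m) ≤ (j+m)/m := Nat.log_le_self _ _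
      have h2 : (j+m)/m ≤ j + m := Nat.div_le_self _ _
      have h3 : j ≤ s.sup id := Finset.le_sup (f := id) hj
      omega
    rw [← Finset.sum_fiberwise_of_maps_to hmem (fun j => c (e (j+m)) • ψ (e (j+m)))]
    refine le_trans (norm_sum_le _ _) ?_
    have hfiber : ∀ i ∈ range (I+1),
        ‖∑ j ∈ s.filter (fun j => Nat.log 2 ((j+m)/m) = i), c (e (j+m)) • ψ (e (j+m))‖
        ≤ K * (m:ℝ) ^ (a-1) * (((2^i * m : ℕ) : ℝ) * |c (e (2^i * m))|) := by
      intro i _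
      set si := s.filter (fun j => Nat.log 2 ((j+m)/m) = i) with hsi
      have hrange : ∀ j ∈ si, 2^i * m ≤ j + m ∧ j + m < 2^(i+1) * m := by
        intro j hj
        rw [hsi, Finset.mem_filter] at hj
        obtain ⟨_, hlog⟩ := hj
        constructor
        · calc 2^i * m = 2^(Nat.log 2 ((j+m)/m)) * m := by rw [hlog]
            _ ≤ ((j+m)/m) * m :=
                Nat.mul_le_mul_right m (Nat.pow_log_le_self 2 (by
                  have : m ≤ j + m := by omega
                  have := Nat.one_le_div_iff hm' |>.mpr this
                  omega))
            _ ≤ j + m := Nat.div_mul_le_self _ _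
        · have hq : (j+m)/m < 2^(i+1) := by
            rw [← hlog]
            exact Nat.lt_pow_succ_log_self (by norm_num) _
          exact (Nat.div_lt_iff_lt_mul hm').mp hq
      have hcard : si.card ≤ 2^i * m := by
        have hc1 : si.card ≤ (Finset.Ico (2^i * m) (2^(i+1) * m)).card := by
          apply Finset.card_le_card_of_injOn (fun j => j + m)
          · intro j hj
            rw [Finset.mem_coe, Finset.mem_Ico]
            exact ⟨(hrange j hj).1, (hrange j hj).2⟩
          · intro x _ y _ h
            simpa using h
        rw [Nat.card_Ico] at hc1
        have hsub : 2^(i+1) * m - 2^i * m = 2^i * m := by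
          have h : 2^(i+1) * m = 2^i * m + 2^i * m := by rw [pow_succ]; ring
          rw [h, Nat.add_sub_cancel]
        rw [hsub] at hc1
        exact hc1
      set Λ := si.image (fun j => e (j+m)) with hΛ
      have himg : ∑ j ∈ si, c (e (j+m)) • ψ (e (j+m)) = ∑ k ∈ Λ, c k • ψ k := by
        rw [hΛ, Finset.sum_image (fun x _ y _ h => by
          have := e.injective h; omega)]
      set M := |c (e (2^i * m))| with hM
      have hcoef : ∀ k ∈ Λ, |c k| ≤ M := by
        intro k hk
        rw [hΛ, Finset.mem_image] at hk
        obtain ⟨j, hj, rfl⟩ := hk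
        exact he (hrange j hj).1
      have hcardΛ : Λ.card ≤ 2^i * m := le_trans Finset.card_image_le hcard
      have habel := abelA ψ K a hK.le ha0 hUB Λ.card Λ le_rfl c M (abs_nonneg _) hcoef
      have hN0 : (0:ℝ) < ((2^i * m : ℕ) : ℝ) := by
        have : 0 < 2^i * m := Nat.mul_pos (Nat.pow_pos (by norm_num)) hm'
        exact_mod_cast this
      have hmN : (m:ℝ) ≤ ((2^i * m : ℕ) : ℝ) := by
        have : m ≤ 2^i * m := Nat.le_mul_of_pos_left m (Nat.pow_pos (by norm_num))
        exact_mod_cast this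
      have hNa : ((2^i * m : ℕ) : ℝ) ^ a = ((2^i * m : ℕ) : ℝ) ^ (a-1) * ((2^i * m : ℕ) : ℝ) := by
        rw [← Real.rpow_add_one hN0.ne' (a-1)]
        congr 1
        ring
      have hmono : ((2^i * m : ℕ) : ℝ) ^ (a-1) ≤ (m:ℝ) ^ (a-1) :=
        Real.rpow_le_rpow_of_nonpos hmR hmN (by linarith)
      calc ‖∑ j ∈ si, c (e (j+m)) • ψ (e (j+m))‖
          = ‖∑ k ∈ Λ, c k • ψ k‖ := by rw [himg]
        _ ≤ K * M * (Λ.card : ℝ) ^ a := habel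
        _ ≤ K * M * ((2^i * m : ℕ) : ℝ) ^ a := by
            apply mul_le_mul_of_nonneg_left _ (mul_nonneg hK.le (abs_nonneg _))
            exact Real.rpow_le_rpow (Nat.cast_nonneg _) (by exact_mod_cast hcardΛ) ha0
        _ = (K * M * ((2^i * m : ℕ) : ℝ)) * ((2^i * m : ℕ) : ℝ) ^ (a-1) := by
            rw [hNa]; ring
        _ ≤ (K * M * ((2^i * m : ℕ) : ℝ)) * (m:ℝ) ^ (a-1) := by
            apply mul_le_mul_of_nonneg_left hmono
            exact mul_nonneg (mul_nonneg hK.le (abs_nonneg _)) hN0.le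
        _ = K * (m:ℝ) ^ (a-1) * (((2^i * m : ℕ) : ℝ) * M) := by ring
    calc ∑ i ∈ range (I+1), ‖∑ j ∈ s.filter (fun j => Nat.log 2 ((j+m)/m) = i),
            c (e (j+m)) • ψ (e (j+m))‖
        ≤ ∑ i ∈ range (I+1), K * (m:ℝ) ^ (a-1) * (((2^i * m : ℕ) : ℝ) * |c (e (2^i * m))|) :=
          Finset.sum_le_sum hfiber
      _ = K * (m:ℝ) ^ (a-1) * ∑ i ∈ range (I+1), ((2^i * m : ℕ) : ℝ) * |c (e (2^i * m))| := by
          rw [Finset.mul_sum]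
      _ ≤ K * (m:ℝ) ^ (a-1) * 3 := by
          apply mul_le_mul_of_nonneg_left (hS I)
          exact mul_nonneg hK.le (Real.rpow_nonneg hmR.le _)
      _ = 3 * K * (m:ℝ) ^ (a-1) := by ring
  -- pass to the limit
  have hg : HasSum (fun j => c (e j) • ψ (e j)) f := e.hasSum_iff.mpr hf
  have hT : HasSum (fun n => c (e (n+m)) • ψ (e (n+m)))
      (f - ∑ j ∈ range m, c (e j) • ψ (e j)) := by
    refine (hasSum_nat_add_iff (f := fun j => c (e j) • ψ (e j)) m).mpr ?_
    simpa using hg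
  have hnorm : Filter.Tendsto (fun s : Finset ℕ => ‖∑ j ∈ s, c (e (j+m)) • ψ (e (j+m))‖)
      Filter.atTop (nhds ‖f - ∑ j ∈ range m, c (e j) • ψ (e j)‖) := hT.norm
  have hfinal : ‖f - ∑ j ∈ range m, c (e j) • ψ (e j)‖ ≤ 3 * K * (m:ℝ) ^ (a-1) :=
    le_of_tendsto' hnorm hpart
  have hpos : (0:ℝ) ≤ K * (m:ℝ) ^ (a-1) := mul_nonneg hK.le (Real.rpow_nonneg hmR.le _)
  linarith
end

section
/- Let $X$ be a Banach space with a Schauder basis $\Psi = \{\psi_k\}$ with $\|\psi_k\| \le 1$, and let $b \in (0, 1]$. Suppose that for every $f \in A_1(\Psi)$ there exists a decreasing permutation $\varrho \in D(f)$ such that $\|f - G_m(f, \Psi, \varrho)\|_X \le m^{-b}$ for all $m \ge 1$. Then $\Psi$ satisfies UB($1-b$, $2$): for every finite $\Lambda \subset \mathbb{N}$ and every choice of signs $\epsilon_k = \pm 1$, $\|\sum_{k \in \Lambda} \epsilon_k \psi_k\|_X \le 2 |\Lambda|^{1-b}$. -/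
open Finset

lemma stmt6_key {X : Type*} [NormedAddCommGroup X] [NormedSpace ℝ X]
    (ψ : ℕ → X) (b : ℝ)
    (hrate : ∀ (c : ℕ → ℝ) (f : X), Summable (fun k => |c k|) → (∑' k, |c k|) ≤ 1 →
      HasSum (fun k => c k • ψ k) f →
      ∃ e : ℕ ≃ ℕ, Antitone (fun j => |c (e j)|) ∧
        ∀ m : ℕ, 1 ≤ m →
          ‖f - ∑ j ∈ Finset.range m, c (e j) • ψ (e j)‖ ≤ (m : ℝ) ^ (-b))
    (Λ : Finset ℕ) (ε : ℕ → ℝ) (hε : ∀ k ∈ Λ, ε k = 1 ∨ ε k = -1)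
    (hm : 1 ≤ Λ.card) (δ : ℝ) (hδ : 0 < δ) :
    ‖∑ k ∈ Λ, ε k • ψ k‖ ≤ (2 + δ) * (Λ.card : ℝ) ^ (1 - b) := by
  set m := Λ.card with hmdef
  have hmpos : (0 : ℝ) < m := by exact_mod_cast hm
  set N : ℕ := Λ.sup id + 1 with hN
  set Q : Finset ℕ := (Finset.range m).image (fun i => i + N) with hQ
  have hQcard : Q.card = m := by
    rw [hQ, Finset.card_image_of_injective _ (add_left_injective N), Finset.card_range]
  have hdisj : ∀ k ∈ Q, k ∉ Λ := by
    intro k hkQ hkΛ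
    rw [hQ, Finset.mem_image] at hkQ
    obtain ⟨i, _, rfl⟩ := hkQ
    have h1 : i + N ≤ Λ.sup id := Finset.le_sup (f := id) hkΛ
    omega
  have h2δ : (0 : ℝ) < 2 + δ := by linarith
  set a : ℝ := ((2 + δ) * m)⁻¹ with ha
  have hapos : 0 < a := by rw [ha]; exact inv_pos.mpr (mul_pos h2δ hmpos)
  have hone : ((2 + δ) * m) * a = 1 := by
    rw [ha]; exact mul_inv_cancel₀ (mul_pos h2δ hmpos).ne'
  clear_value a
  clear ha
  set c : ℕ → ℝ := fun k => if k ∈ Λ then ε k * a else if k ∈ Q then (1 + δ) * a else 0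
    with hc
  clear_value c
  have hcΛ : ∀ k ∈ Λ, c k = ε k * a := by intro k hk; simp [hc, hk]
  have hcQ : ∀ k ∈ Q, c k = (1 + δ) * a := by
    intro k hk; simp [hc, hk, hdisj k hk]
  have hcabsΛ : ∀ k ∈ Λ, |c k| = a := by
    intro k hk
    rw [hcΛ k hk]
    rcases hε k hk with h | h <;> rw [h] <;>
      simp [abs_of_pos hapos, abs_of_nonneg hapos.le]
  have hczero : ∀ k ∉ Λ ∪ Q, c k = 0 := by
    intro k hk
    rw [Finset.mem_union] at hk
    push_neg at hk
    simp [hc, hk.1, hk.2]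
  have hdisj' : Disjoint Λ Q := by
    rw [Finset.disjoint_right]; intro k hk; exact hdisj k hk
  have hsummable : Summable (fun k => |c k|) := by
    apply summable_of_ne_finset_zero (s := Λ ∪ Q)
    intro k hk; rw [hczero k hk, abs_zero]
  have htsum : (∑' k, |c k|) = 1 := by
    rw [tsum_eq_sum (s := Λ ∪ Q) (fun k hk => by rw [hczero k hk, abs_zero]),
      Finset.sum_union hdisj']
    have h1 : ∑ k ∈ Λ, |c k| = m * a := by
      rw [Finset.sum_congr rfl hcabsΛ, Finset.sum_const, nsmul_eq_mul]
    have h2 : ∑ k ∈ Q, |c k| = m * ((1 + δ) * a) := by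
      rw [Finset.sum_congr rfl (fun k hk => by
        rw [hcQ k hk, abs_of_pos (mul_pos (by linarith) hapos)]),
        Finset.sum_const, nsmul_eq_mul, hQcard]
    rw [h1, h2]
    linear_combination hone
  set f : X := ∑ k ∈ Λ ∪ Q, c k • ψ k with hf
  clear_value f
  have hhasSum : HasSum (fun k => c k • ψ k) f := by
    rw [hf]
    apply hasSum_sum_of_ne_finset_zero
    intro k hk; rw [hczero k hk, zero_smul]
  obtain ⟨e, hA, hB⟩ := hrate c f hsummable (le_of_eq htsum) hhasSum
  -- the first m indices of e are exactly Q
  have hsub : ∀ j < m, e j ∈ Q := by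
    by_contra hcon
    push_neg at hcon
    obtain ⟨j, hjm, hjQ⟩ := hcon
    have hTcard : (Q.image e.symm).card = m := by
      rw [Finset.card_image_of_injective _ e.symm.injective, hQcard]
    have hTsub : Q.image e.symm ⊆ Finset.range j := by
      intro j' hj'
      rw [Finset.mem_image] at hj'
      obtain ⟨k, hkQ, rfl⟩ := hj'
      have hval : |c (e (e.symm k))| = (1 + δ) * a := by
        rw [e.apply_symm_apply, hcQ k hkQ]
        exact abs_of_pos (mul_pos (by linarith) hapos)
      have hsmall : |c (e j)| ≤ a := by
        by_cases h : e j ∈ Λ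
        · exact le_of_eq (hcabsΛ _ h)
        · rw [hczero _ (by rw [Finset.mem_union]; push_neg; exact ⟨h, hjQ⟩), abs_zero]
          exact hapos.le
      rw [Finset.mem_range]
      by_contra hle
      push_neg at hle
      have := hA hle
      simp only [hval] at this
      nlinarith
    have := Finset.card_le_card hTsub
    rw [hTcard, Finset.card_range] at this
    omega
  have himg : (Finset.range m).image e = Q := by
    apply Finset.eq_of_subset_of_card_le
    · intro k hk
      rw [Finset.mem_image] at hk
      obtain ⟨j, hj, rfl⟩ := hk
      exact hsub j (Finset.mem_range.mp hj)
    · rw [Finset.card_image_of_injective _ e.injective, Finset.card_range, hQcard]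
  have hG : ∑ j ∈ Finset.range m, c (e j) • ψ (e j) = ∑ k ∈ Q, c k • ψ k := by
    rw [← himg, Finset.sum_image (fun x _ y _ h => e.injective h)]
  have hdiff : f - ∑ j ∈ Finset.range m, c (e j) • ψ (e j)
      = a • ∑ k ∈ Λ, ε k • ψ k := by
    rw [hG, hf, Finset.sum_union hdisj', add_sub_cancel_right, Finset.smul_sum]
    apply Finset.sum_congr rfl
    intro k hk
    rw [hcΛ k hk, smul_smul, mul_comm]
  have hbound := hB m hm
  rw [hdiff, norm_smul, Real.norm_eq_abs, abs_of_pos hapos] at hbound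
  have hr : (m : ℝ) ^ (1 - b) = (m : ℝ) * (m : ℝ) ^ (-b) := by
    rw [show (1 : ℝ) - b = 1 + (-b) by ring, Real.rpow_add hmpos, Real.rpow_one]
  have hainv : a⁻¹ = (2 + δ) * m := by
    field_simp at hone ⊢
    linarith [hone]
  calc ‖∑ k ∈ Λ, ε k • ψ k‖ = a⁻¹ * (a * ‖∑ k ∈ Λ, ε k • ψ k‖) := by
        rw [← mul_assoc, inv_mul_cancel₀ hapos.ne', one_mul]
    _ ≤ a⁻¹ * (m : ℝ) ^ (-b) :=
        mul_le_mul_of_nonneg_left hbound (inv_nonneg.mpr hapos.le)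
    _ = (2 + δ) * (m : ℝ) ^ (1 - b) := by rw [hainv, hr]; ring

/-- Criterion, part (A). Let `ψ` be a basis with `‖ψ k‖ ≤ 1` and `b ∈ (0,1]`. Suppose that
for every `f ∈ A₁(Ψ)` (given by coefficients `c` with `∑ |c k| ≤ 1` and `f = ∑ c k • ψ k`)
there is a decreasing permutation `e ∈ D(f)` such that the greedy approximants satisfy
`‖f - G_m(f, Ψ, e)‖ ≤ m^(-b)` for all `m ≥ 1`. Then `Ψ` satisfies UB(1-b, 2):
`‖∑_{k ∈ Λ} ε k • ψ k‖ ≤ 2 |Λ|^(1-b)` for all finite `Λ` and signs `ε k = ±1`. -/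
theorem stmt6 {X : Type*} [NormedAddCommGroup X] [NormedSpace ℝ X] [CompleteSpace X]
    (ψ : ℕ → X) (hψ : ∀ k, ‖ψ k‖ ≤ 1) (b : ℝ) (hb0 : 0 < b) (hb1 : b ≤ 1)
    (hrate : ∀ (c : ℕ → ℝ) (f : X), Summable (fun k => |c k|) → (∑' k, |c k|) ≤ 1 →
      HasSum (fun k => c k • ψ k) f →
      ∃ e : ℕ ≃ ℕ, Antitone (fun j => |c (e j)|) ∧
        ∀ m : ℕ, 1 ≤ m →
          ‖f - ∑ j ∈ Finset.range m, c (e j) • ψ (e j)‖ ≤ (m : ℝ) ^ (-b)) :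
    ∀ (Λ : Finset ℕ) (ε : ℕ → ℝ), (∀ k ∈ Λ, ε k = 1 ∨ ε k = -1) →
      ‖∑ k ∈ Λ, ε k • ψ k‖ ≤ 2 * (Λ.card : ℝ) ^ (1 - b) := by
  intro Λ ε hε
  rcases Nat.eq_zero_or_pos Λ.card with h0 | hm
  · rw [Finset.card_eq_zero] at h0
    subst h0
    simp only [Finset.sum_empty, norm_zero, Finset.card_empty, Nat.cast_zero]
    positivity
  · have hmpos : (0 : ℝ) < Λ.card := by exact_mod_cast hm
    have hMpos : (0 : ℝ) < (Λ.card : ℝ) ^ (1 - b) := Real.rpow_pos_of_pos hmpos _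
    apply le_of_forall_pos_le_add
    intro η hη
    have hkey := stmt6_key ψ b hrate Λ ε hε hm (η / (Λ.card : ℝ) ^ (1 - b))
      (by positivity)
    calc ‖∑ k ∈ Λ, ε k • ψ k‖
        ≤ (2 + η / (Λ.card : ℝ) ^ (1 - b)) * (Λ.card : ℝ) ^ (1 - b) := hkey
      _ = 2 * (Λ.card : ℝ) ^ (1 - b) + η := by field_simp
end

section
/- Let $2 \le p < \infty$ and let $\Psi$ be an unconditional basis of $L_p(\Omega, \mu)$ with $\|\psi_n\|_p \le 1$. Then there is a constant $C(p, \Psi)$ such that for all $f$ with finite $A_1$-norm, all $m \ge 1$, and all $\alpha \in [0,1]$: $\|f - G_m(f, \Psi)\|_p \le C(p, \Psi)\, m^{-\alpha/2}\, \|f\|_p^{1-\alpha} \|f\|_{A_1(\Psi)}^{\alpha}$. -/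
open Finset MeasureTheory
open scoped ENNReal

open Nat

set_option maxHeartbeats 1000000
set_option synthInstance.maxHeartbeats 1000000

section Auxiliary

/-- `cosh x ≤ exp (x^2)` for `|x| ≤ 1`. -/
lemma cosh_bound {x : ℝ} (hx : |x| ≤ 1) :
    Real.exp x + Real.exp (-x) ≤ 2 * Real.exp (x ^ 2) := by
  have h1 := Real.exp_bound hx (n := 2) (by norm_num)
  have h2 := Real.exp_bound (x := -x) (by rwa [abs_neg]) (n := 2) (by norm_num)
  have e1 : Real.exp x ≤ 1 + x + |x| ^ 2 * (3 / (2*2)) := by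
    have := abs_le.1 h1
    simp [Finset.sum_range_succ] at this ⊢
    nlinarith [this.2]
  have e2 : Real.exp (-x) ≤ 1 - x + |x| ^ 2 * (3 / (2*2)) := by
    have := abs_le.1 h2
    simp [Finset.sum_range_succ] at this ⊢
    nlinarith [this.2]
  have : Real.exp x + Real.exp (-x) ≤ 2 * (1 + x ^ 2) := by
    rw [sq_abs] at e1 e2; nlinarith
  refine this.trans ?_
  have := Real.add_one_le_exp (x ^ 2)
  nlinarith

/-- average of exp of random signs. -/
lemma khin_exp (S : Finset ℕ) (b : ℕ → ℝ) (hb : ∀ n ∈ S, |b n| ≤ 1) :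
    ∑ Λ ∈ S.powerset, Real.exp (∑ n ∈ S, (if n ∈ Λ then b n else -b n)) ≤
      2 ^ S.card * Real.exp (∑ n ∈ S, (b n) ^ 2) := by
  classical
  induction S using Finset.induction_on with
  | empty => simp
  | @insert x S hx ih =>
    have hb' : ∀ n ∈ S, |b n| ≤ 1 := fun n hn => hb n (mem_insert_of_mem hn)
    rw [Finset.sum_powerset_insert hx]
    have key : ∀ t ∈ S.powerset,
        Real.exp (∑ n ∈ insert x S, (if n ∈ t then b n else -b n)) +
        Real.exp (∑ n ∈ insert x S, (if n ∈ insert x t then b n else -b n)) =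
        (Real.exp (b x) + Real.exp (-(b x))) *
          Real.exp (∑ n ∈ S, (if n ∈ t then b n else -b n)) := by
      intro t ht
      rw [Finset.mem_powerset] at ht
      have hxt : x ∉ t := fun h => hx (ht h)
      have h1 : ∑ n ∈ insert x S, (if n ∈ t then b n else -b n)
          = -b x + ∑ n ∈ S, (if n ∈ t then b n else -b n) := by
        rw [Finset.sum_insert hx, if_neg hxt]
      have h2 : ∑ n ∈ insert x S, (if n ∈ insert x t then b n else -b n)
          = b x + ∑ n ∈ S, (if n ∈ t then b n else -b n) := by
        rw [Finset.sum_insert hx, if_pos (mem_insert_self x t)]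
        congr 1
        refine Finset.sum_congr rfl fun n hn => ?_
        have hne : n ≠ x := fun h => hx (h ▸ hn)
        simp [Finset.mem_insert, hne]
      rw [h1, h2, Real.exp_add, Real.exp_add]
      ring
    calc ∑ t ∈ S.powerset, Real.exp (∑ n ∈ insert x S, (if n ∈ t then b n else -b n))
          + ∑ t ∈ S.powerset, Real.exp (∑ n ∈ insert x S, (if n ∈ insert x t then b n else -b n))
        = ∑ t ∈ S.powerset, ((Real.exp (b x) + Real.exp (-(b x))) *
            Real.exp (∑ n ∈ S, (if n ∈ t then b n else -b n))) := by
          rw [← Finset.sum_add_distrib]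
          exact Finset.sum_congr rfl key
      _ = (Real.exp (b x) + Real.exp (-(b x))) *
            ∑ t ∈ S.powerset, Real.exp (∑ n ∈ S, (if n ∈ t then b n else -b n)) := by
          rw [Finset.mul_sum]
      _ ≤ (2 * Real.exp ((b x) ^ 2)) * (2 ^ S.card * Real.exp (∑ n ∈ S, (b n) ^ 2)) := by
          apply mul_le_mul (cosh_bound (hb x (mem_insert_self x S))) (ih hb')
            (Finset.sum_nonneg fun t _ => (Real.exp_pos _).le)
            (by positivity)
      _ = 2 ^ (insert x S).card * Real.exp (∑ n ∈ insert x S, (b n) ^ 2) := by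
          rw [Finset.card_insert_of_notMem hx, Finset.sum_insert hx, Real.exp_add]
          ring

lemma exp_add_exp_neg_pos (x : ℝ) : (0:ℝ) < Real.exp x + Real.exp (-x) := by
  positivity

lemma one_le_exp_add_exp_neg (x : ℝ) : (1:ℝ) ≤ Real.exp x + Real.exp (-x) := by
  rcases le_total 0 x with h | h
  · have := Real.one_le_exp h
    nlinarith [Real.exp_pos (-x)]
  · have := Real.one_le_exp (neg_nonneg.2 h)
    nlinarith [Real.exp_pos x]

lemma abs_rpow_le_cosh {r : ℝ} (hr : 1 ≤ r) {n : ℕ} (hn : r ≤ n) (x : ℝ) :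
    |x| ^ r ≤ (1 + (n ! : ℝ)) * (Real.exp x + Real.exp (-x)) := by
  have hcosh := one_le_exp_add_exp_neg x
  have hfac : (1:ℝ) ≤ 1 + (n ! : ℝ) := by
    have : (0:ℝ) ≤ (n ! : ℝ) := Nat.cast_nonneg _
    linarith
  rcases le_total |x| 1 with h | h
  · have h1 : |x| ^ r ≤ 1 := Real.rpow_le_one (abs_nonneg x) h (by linarith)
    calc |x| ^ r ≤ 1 := h1
      _ ≤ (1 + (n ! : ℝ)) * (Real.exp x + Real.exp (-x)) := by nlinarith
  · have h1 : |x| ^ r ≤ |x| ^ (n:ℝ) :=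
      Real.rpow_le_rpow_of_exponent_le h hn
    have h2 : |x| ^ (n:ℝ) = |x| ^ n := Real.rpow_natCast _ n
    have h3 : |x| ^ n ≤ (n ! : ℝ) * Real.exp |x| := by
      have hs : |x| ^ n / (n ! : ℝ) ≤ Real.exp |x| := by
        calc |x| ^ n / (n ! : ℝ) ≤ ∑ i ∈ range (n+1), |x| ^ i / i ! := by
              exact Finset.single_le_sum (f := fun i => |x| ^ i / (i ! : ℝ))
                (fun i _ => by positivity) (self_mem_range_succ n)
          _ ≤ Real.exp |x| := Real.sum_le_exp_of_nonneg (abs_nonneg x) (n+1)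
      have hfpos : (0:ℝ) < (n ! : ℝ) := by exact_mod_cast Nat.factorial_pos n
      calc |x| ^ n = (|x| ^ n / (n ! : ℝ)) * (n ! : ℝ) := by field_simp
        _ ≤ Real.exp |x| * (n ! : ℝ) := by
            exact mul_le_mul_of_nonneg_right hs hfpos.le
        _ = (n ! : ℝ) * Real.exp |x| := mul_comm _ _
    have h4 : Real.exp |x| ≤ Real.exp x + Real.exp (-x) := by
      rcases abs_cases x with ⟨h5, _⟩ | ⟨h5, _⟩
      · rw [h5]; nlinarith [Real.exp_pos (-x)]
      · rw [h5]; nlinarith [Real.exp_pos x]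
    calc |x| ^ r ≤ |x| ^ n := by rw [← h2]; exact h1
      _ ≤ (n ! : ℝ) * (Real.exp x + Real.exp (-x)) := by
          refine h3.trans ?_
          exact mul_le_mul_of_nonneg_left h4 (Nat.cast_nonneg _)
      _ ≤ (1 + (n ! : ℝ)) * (Real.exp x + Real.exp (-x)) := by nlinarith

/-- Khintchine inequality, normalized case. -/
lemma khin_normalized {r : ℝ} (hr : 1 ≤ r) {n : ℕ} (hn : r ≤ n)
    (S : Finset ℕ) (b : ℕ → ℝ) (hb1 : ∀ m ∈ S, |b m| ≤ 1)
    (hb : ∑ m ∈ S, (b m) ^ 2 ≤ 1) :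
    ∑ Λ ∈ S.powerset, |∑ m ∈ S, (if m ∈ Λ then b m else -b m)| ^ r ≤
      (2 * (1 + (n ! : ℝ)) * Real.exp 1) * 2 ^ S.card := by
  classical
  have key : ∀ Λ ∈ S.powerset,
      |∑ m ∈ S, (if m ∈ Λ then b m else -b m)| ^ r ≤
      (1 + (n ! : ℝ)) * (Real.exp (∑ m ∈ S, (if m ∈ Λ then b m else -b m)) +
        Real.exp (∑ m ∈ S, (if m ∈ Λ then -b m else -(-b m)))) := by
    intro Λ _
    have := abs_rpow_le_cosh hr hn (∑ m ∈ S, (if m ∈ Λ then b m else -b m))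
    convert this using 4
    rw [← Finset.sum_neg_distrib]
    refine Finset.sum_congr rfl fun m _ => ?_
    by_cases h : m ∈ Λ <;> simp [h]
  have hS1 : ∑ Λ ∈ S.powerset, Real.exp (∑ m ∈ S, (if m ∈ Λ then b m else -b m)) ≤
      2 ^ S.card * Real.exp 1 := by
    refine (khin_exp S b hb1).trans ?_
    have := Real.exp_le_exp.2 hb
    nlinarith [pow_pos (show (0:ℝ) < 2 by norm_num) S.card]
  have hS2 : ∑ Λ ∈ S.powerset, Real.exp (∑ m ∈ S, (if m ∈ Λ then -b m else -(-b m))) ≤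
      2 ^ S.card * Real.exp 1 := by
    have hb1' : ∀ m ∈ S, |(-b) m| ≤ 1 := fun m hm => by
      simpa using hb1 m hm
    refine le_trans ?_ ((khin_exp S (fun m => -b m) hb1').trans ?_)
    · apply le_of_eq; rfl
    · have hb' : ∑ m ∈ S, (-b m) ^ 2 ≤ 1 := by simpa using hb
      have := Real.exp_le_exp.2 hb'
      nlinarith [pow_pos (show (0:ℝ) < 2 by norm_num) S.card]
  calc ∑ Λ ∈ S.powerset, |∑ m ∈ S, (if m ∈ Λ then b m else -b m)| ^ r
      ≤ ∑ Λ ∈ S.powerset, (1 + (n ! : ℝ)) * (Real.exp (∑ m ∈ S, (if m ∈ Λ then b m else -b m)) +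
        Real.exp (∑ m ∈ S, (if m ∈ Λ then -b m else -(-b m)))) := Finset.sum_le_sum key
    _ = (1 + (n ! : ℝ)) * ((∑ Λ ∈ S.powerset, Real.exp (∑ m ∈ S, (if m ∈ Λ then b m else -b m))) +
        ∑ Λ ∈ S.powerset, Real.exp (∑ m ∈ S, (if m ∈ Λ then -b m else -(-b m)))) := by
        rw [← Finset.mul_sum, Finset.sum_add_distrib]
    _ ≤ (1 + (n ! : ℝ)) * (2 ^ S.card * Real.exp 1 + 2 ^ S.card * Real.exp 1) := by
        have hfac : (0:ℝ) ≤ 1 + (n ! : ℝ) := by positivity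
        exact mul_le_mul_of_nonneg_left (add_le_add hS1 hS2) hfac
    _ = (2 * (1 + (n ! : ℝ)) * Real.exp 1) * 2 ^ S.card := by ring

/-- Khintchine inequality, scaled version. -/
lemma khin_scaled {r : ℝ} (hr : 1 ≤ r) {n : ℕ} (hn : r ≤ n)
    (S : Finset ℕ) (a : ℕ → ℝ) :
    ∑ Λ ∈ S.powerset, |∑ m ∈ S, (if m ∈ Λ then a m else -a m)| ^ r ≤
      (2 * (1 + (n ! : ℝ)) * Real.exp 1) * 2 ^ S.card * (∑ m ∈ S, (a m) ^ 2) ^ (r / 2) := by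
  classical
  set σ2 := ∑ m ∈ S, (a m) ^ 2 with hσ2
  have hσ2nn : 0 ≤ σ2 := Finset.sum_nonneg fun m _ => sq_nonneg _
  rcases eq_or_lt_of_le hσ2nn with h0 | hpos
  · -- all coefficients vanish
    have hz : ∀ m ∈ S, a m = 0 := by
      intro m hm
      have := (Finset.sum_eq_zero_iff_of_nonneg (fun i _ => sq_nonneg (a i))).1 h0.symm m hm
      exact pow_eq_zero_iff (n := 2) (by norm_num) |>.1 this
    have hT : ∀ Λ ∈ S.powerset, |∑ m ∈ S, (if m ∈ Λ then a m else -a m)| ^ r = 0 := by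
      intro Λ _
      have : ∑ m ∈ S, (if m ∈ Λ then a m else -a m) = 0 := by
        refine Finset.sum_eq_zero fun m hm => ?_
        rw [hz m hm]; simp
      rw [this, abs_zero, Real.zero_rpow (by linarith)]
    rw [Finset.sum_congr rfl hT, Finset.sum_const, smul_zero, ← h0,
      Real.zero_rpow (by positivity)]
    simp
  · set σ := Real.sqrt σ2 with hσ
    have hσpos : 0 < σ := Real.sqrt_pos.2 hpos
    set b : ℕ → ℝ := fun m => a m / σ with hb
    have hab : ∀ m, a m = σ * b m := fun m => by
      rw [hb]; show a m = σ * (a m / σ)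
      rw [mul_div_assoc', mul_comm, mul_div_assoc, div_self hσpos.ne', mul_one]
    have hsumb : ∑ m ∈ S, (b m) ^ 2 = 1 := by
      have h2 : ∑ m ∈ S, (b m) ^ 2 = σ2 / σ ^ 2 := by
        rw [hσ2, Finset.sum_div]
        exact Finset.sum_congr rfl fun m _ => by rw [hb]; ring
      rw [h2, hσ, Real.sq_sqrt hσ2nn, div_self (ne_of_gt hpos)]
    have hb1 : ∀ m ∈ S, |b m| ≤ 1 := by
      intro m hm
      have h1 : (b m) ^ 2 ≤ 1 := by
        rw [← hsumb]
        exact Finset.single_le_sum (f := fun i => (b i) ^ 2) (fun i _ => sq_nonneg _) hm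
      nlinarith [abs_nonneg (b m), sq_abs (b m)]
    have key := khin_normalized hr hn S b hb1 (le_of_eq hsumb)
    have hTs : ∀ Λ : Finset ℕ, |∑ m ∈ S, (if m ∈ Λ then a m else -a m)| ^ r =
        σ ^ r * |∑ m ∈ S, (if m ∈ Λ then b m else -b m)| ^ r := by
      intro Λ
      have h1 : ∑ m ∈ S, (if m ∈ Λ then a m else -a m) =
          σ * ∑ m ∈ S, (if m ∈ Λ then b m else -b m) := by
        rw [Finset.mul_sum]
        refine Finset.sum_congr rfl fun m _ => ?_
        rw [hab m]; by_cases h : m ∈ Λ <;> simp [h] <;> ring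
      rw [h1, abs_mul, abs_of_nonneg hσpos.le,
        Real.mul_rpow hσpos.le (abs_nonneg _)]
    have hσr : σ2 ^ (r / 2) = σ ^ r := by
      rw [hσ, ← Real.sq_sqrt hσ2nn,
        ← Real.rpow_natCast (Real.sqrt σ2) 2, ← Real.rpow_mul (Real.sqrt_nonneg _)]
      norm_num
      congr 1
      ring
    calc ∑ Λ ∈ S.powerset, |∑ m ∈ S, (if m ∈ Λ then a m else -a m)| ^ r
        = σ ^ r * ∑ Λ ∈ S.powerset, |∑ m ∈ S, (if m ∈ Λ then b m else -b m)| ^ r := by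
          rw [Finset.mul_sum]; exact Finset.sum_congr rfl fun Λ _ => hTs Λ
      _ ≤ σ ^ r * ((2 * (1 + (n ! : ℝ)) * Real.exp 1) * 2 ^ S.card) := by
          refine mul_le_mul_of_nonneg_left key ?_
          positivity
      _ = (2 * (1 + (n ! : ℝ)) * Real.exp 1) * 2 ^ S.card * σ2 ^ (r / 2) := by
          rw [hσr]; ring


variable {Ω : Type*} [MeasurableSpace Ω] {μ : Measure Ω} {p : ℝ≥0∞} [Fact (1 ≤ p)]

lemma LpcoeFn_sum (S : Finset ℕ) (g : ℕ → Lp ℝ p μ) :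
    ∀ᵐ x ∂μ, ((∑ n ∈ S, g n : Lp ℝ p μ) : Ω → ℝ) x = ∑ n ∈ S, (g n : Ω → ℝ) x := by
  classical
  induction S using Finset.induction_on with
  | empty => simp only [Finset.sum_empty]; exact Lp.coeFn_zero (E := ℝ) (p := p) (μ := μ)
  | @insert a S ha ih =>
    filter_upwards [Lp.coeFn_add (∑ n ∈ S, g n) (g a), ih] with x h1 h2
    rw [Finset.sum_insert ha, Finset.sum_insert ha, add_comm (g a)]
    calc ((∑ n ∈ S, g n + g a : Lp ℝ p μ) : Ω → ℝ) x
        = ((∑ n ∈ S, g n : Lp ℝ p μ) : Ω → ℝ) x + (g a : Ω → ℝ) x := h1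
      _ = ∑ n ∈ S, (g n : Ω → ℝ) x + (g a : Ω → ℝ) x := by rw [h2]
      _ = (g a : Ω → ℝ) x + ∑ n ∈ S, (g n : Ω → ℝ) x := by ring

lemma norm_rpow_eq_lintegral (hp0 : p ≠ 0) (hptop : p ≠ ⊤) (h : Lp ℝ p μ) :
    ENNReal.ofReal (‖h‖ ^ p.toReal) = ∫⁻ x, (‖(h : Ω → ℝ) x‖₊ : ℝ≥0∞) ^ p.toReal ∂μ := by
  have hr0 : 0 < p.toReal := ENNReal.toReal_pos hp0 hptop
  have hsn := eLpNorm_eq_lintegral_rpow_enorm_toReal (f := (h : Ω → ℝ)) (μ := μ) hp0 hptop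
  simp only [enorm_eq_nnnorm] at hsn
  have hI : (∫⁻ x, (‖(h : Ω → ℝ) x‖₊ : ℝ≥0∞) ^ p.toReal ∂μ) = eLpNorm (h : Ω → ℝ) p μ ^ p.toReal := by
    rw [hsn, ← ENNReal.rpow_mul, one_div, inv_mul_cancel₀ (ne_of_gt hr0), ENNReal.rpow_one]
  rw [hI, Lp.norm_def, ENNReal.toReal_rpow, ENNReal.ofReal_toReal]
  exact ENNReal.rpow_ne_top_of_nonneg hr0.le (Lp.eLpNorm_ne_top h)

lemma lintegral_ne_top_of_Lp (hp0 : p ≠ 0) (hptop : p ≠ ⊤) (h : Lp ℝ p μ) :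
    (∫⁻ x, (‖(h : Ω → ℝ) x‖₊ : ℝ≥0∞) ^ p.toReal ∂μ) ≠ ⊤ := by
  rw [← norm_rpow_eq_lintegral hp0 hptop h]
  exact ENNReal.ofReal_ne_top

lemma lint_minkowski (q : ℝ) (hq : 1 ≤ q) (S : Finset ℕ) (f : ℕ → Ω → ℝ≥0∞)
    (hf : ∀ n, AEMeasurable (f n) μ) :
    (∫⁻ x, (∑ n ∈ S, f n x) ^ q ∂μ) ^ (1 / q) ≤
      ∑ n ∈ S, (∫⁻ x, (f n x) ^ q ∂μ) ^ (1 / q) := by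
  classical
  have hq0 : 0 < q := lt_of_lt_of_le one_pos hq
  induction S using Finset.induction_on with
  | empty =>
    simp [ENNReal.zero_rpow_of_pos hq0, ENNReal.zero_rpow_of_pos (show (0:ℝ) < 1/q by positivity), hq0]
  | @insert a S ha ih =>
    have hsum : AEMeasurable (fun x => ∑ n ∈ S, f n x) μ :=
      Finset.aemeasurable_fun_sum S fun n _ => hf n
    calc (∫⁻ x, (∑ n ∈ insert a S, f n x) ^ q ∂μ) ^ (1 / q)
        = (∫⁻ x, (f a x + ∑ n ∈ S, f n x) ^ q ∂μ) ^ (1 / q) := by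
          congr 1; refine lintegral_congr fun x => ?_
          rw [Finset.sum_insert ha]
      _ ≤ (∫⁻ x, (f a x) ^ q ∂μ) ^ (1 / q) + (∫⁻ x, (∑ n ∈ S, f n x) ^ q ∂μ) ^ (1 / q) :=
          ENNReal.lintegral_Lp_add_le (hf a) hsum hq
      _ ≤ (∫⁻ x, (f a x) ^ q ∂μ) ^ (1 / q) + ∑ n ∈ S, (∫⁻ x, (f n x) ^ q ∂μ) ^ (1 / q) :=
          add_le_add_right ih _
      _ = ∑ n ∈ insert a S, (∫⁻ x, (f n x) ^ q ∂μ) ^ (1 / q) := by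
          rw [Finset.sum_insert ha]


lemma proj_bound (ψ : ℕ → Lp ℝ p μ) (cf : Lp ℝ p μ → ℕ → ℝ)
    (huniq : ∀ (g : Lp ℝ p μ) (c : ℕ → ℝ), HasSum (fun n => c n • ψ n) g → c = cf g)
    (K : ℝ)
    (hunc : ∀ (f : Lp ℝ p μ) (Λ : Set ℕ),
      ∃ g : Lp ℝ p μ, HasSum (fun n => Λ.indicator (cf f) n • ψ n) g ∧ ‖g‖ ≤ K * ‖f‖)
    (S : Finset ℕ) (c : ℕ → ℝ) (Λ : Finset ℕ) (hΛ : Λ ⊆ S) :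
    ‖∑ n ∈ Λ, c n • ψ n‖ ≤ K * ‖∑ n ∈ S, c n • ψ n‖ := by
  classical
  set g : Lp ℝ p μ := ∑ n ∈ S, c n • ψ n with hg
  set c' : ℕ → ℝ := fun n => if n ∈ S then c n else 0 with hc'
  have hsum : HasSum (fun n => c' n • ψ n) g := by
    have h1 : ∀ n ∉ S, c' n • ψ n = 0 := by
      intro n hn; simp [hc', hn]
    have h2 := hasSum_sum_of_ne_finset_zero (L := SummationFilter.unconditional _) (s := S) h1
    convert h2 using 1
    rw [hg]
    exact Finset.sum_congr rfl fun n hn => by simp [hc', hn]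
  have hcf : c' = cf g := huniq g c' hsum
  obtain ⟨gΛ, hgΛ, hb⟩ := hunc g (↑Λ : Set ℕ)
  have hgΛ' : gΛ = ∑ n ∈ Λ, c n • ψ n := by
    have h1 : ∀ n ∉ Λ, (↑Λ : Set ℕ).indicator (cf g) n • ψ n = 0 := by
      intro n hn
      rw [Set.indicator_of_notMem (by simpa using hn)]
      simp
    have h2 := hasSum_sum_of_ne_finset_zero (L := SummationFilter.unconditional _) (s := Λ) h1
    have h3 : ∑ n ∈ Λ, (↑Λ : Set ℕ).indicator (cf g) n • ψ n = ∑ n ∈ Λ, c n • ψ n := by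
      refine Finset.sum_congr rfl fun n hn => ?_
      rw [Set.indicator_of_mem (by simpa using hn), ← hcf, hc']
      simp [hΛ hn]
    rw [h3] at h2
    exact hgΛ.unique h2
  rw [← hgΛ']
  exact hb

lemma flip_bound (ψ : ℕ → Lp ℝ p μ) (cf : Lp ℝ p μ → ℕ → ℝ)
    (huniq : ∀ (g : Lp ℝ p μ) (c : ℕ → ℝ), HasSum (fun n => c n • ψ n) g → c = cf g)
    (K : ℝ) (hK : 0 < K)
    (hunc : ∀ (f : Lp ℝ p μ) (Λ : Set ℕ),
      ∃ g : Lp ℝ p μ, HasSum (fun n => Λ.indicator (cf f) n • ψ n) g ∧ ‖g‖ ≤ K * ‖f‖)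
    (S : Finset ℕ) (c : ℕ → ℝ) (Λ : Finset ℕ) (hΛ : Λ ⊆ S) :
    ‖∑ n ∈ S, c n • ψ n‖ ≤
      (2 * K + 1) * ‖∑ n ∈ S, (if n ∈ Λ then c n else -c n) • ψ n‖ := by
  classical
  set c' : ℕ → ℝ := fun n => if n ∈ Λ then c n else -c n with hc'
  set g : Lp ℝ p μ := ∑ n ∈ S, c n • ψ n with hg
  set g' : Lp ℝ p μ := ∑ n ∈ S, c' n • ψ n with hg'
  have hP : ‖∑ n ∈ Λ, c' n • ψ n‖ ≤ K * ‖g'‖ :=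
    proj_bound ψ cf huniq K hunc S c' Λ hΛ
  have hPc : ∑ n ∈ Λ, c' n • ψ n = ∑ n ∈ Λ, c n • ψ n :=
    Finset.sum_congr rfl fun n hn => by simp [hc', hn]
  have hsplit : g = (2:ℝ) • (∑ n ∈ Λ, c n • ψ n) - g' := by
    have h1 : g + g' = (2:ℝ) • (∑ n ∈ Λ, c n • ψ n) := by
      rw [hg, hg', ← Finset.sum_add_distrib, Finset.smul_sum]
      have h2 : ∀ n ∈ S, c n • ψ n + c' n • ψ n =
          (if n ∈ Λ then (2:ℝ) • (c n • ψ n) else 0) := by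
        intro n _
        by_cases h : n ∈ Λ
        · simp only [hc', if_pos h]
          rw [← add_smul, smul_smul]
          norm_num
          rw [two_mul, add_smul]
        · simp only [hc', if_neg h]
          rw [← add_smul]
          simp
      rw [Finset.sum_congr rfl h2, Finset.sum_ite_mem,
        Finset.inter_eq_right.2 hΛ]
    rw [← h1]; abel
  rw [hsplit]
  calc ‖(2:ℝ) • (∑ n ∈ Λ, c n • ψ n) - g'‖
      ≤ ‖(2:ℝ) • (∑ n ∈ Λ, c n • ψ n)‖ + ‖g'‖ := norm_sub_le _ _
    _ = 2 * ‖∑ n ∈ Λ, c n • ψ n‖ + ‖g'‖ := by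
        rw [norm_smul]; norm_num
    _ ≤ 2 * (K * ‖g'‖) + ‖g'‖ := by
        rw [← hPc] at *
        nlinarith [hP]
    _ = (2 * K + 1) * ‖g'‖ := by ring


lemma square_est (hp2 : 2 ≤ p) (hptop : p ≠ ⊤)
    (ψ : ℕ → Lp ℝ p μ) (hψ : ∀ n, ‖ψ n‖ ≤ 1)
    (cf : Lp ℝ p μ → ℕ → ℝ)
    (huniq : ∀ (g : Lp ℝ p μ) (c : ℕ → ℝ), HasSum (fun n => c n • ψ n) g → c = cf g)
    (K : ℝ) (hK : 0 < K)
    (hunc : ∀ (f : Lp ℝ p μ) (Λ : Set ℕ),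
      ∃ g : Lp ℝ p μ, HasSum (fun n => Λ.indicator (cf f) n • ψ n) g ∧ ‖g‖ ≤ K * ‖f‖) :
    ∃ C3 ≥ (1:ℝ), ∀ (S : Finset ℕ) (c : ℕ → ℝ),
      ‖∑ n ∈ S, c n • ψ n‖ ≤ C3 * Real.sqrt (∑ n ∈ S, (c n) ^ 2) := by
  classical
  set r : ℝ := p.toReal with hr
  have hp0 : p ≠ 0 := by
    intro h; rw [h] at hp2; exact absurd hp2 (by simp)
  have hr2 : 2 ≤ r := by
    have := ENNReal.toReal_mono hptop hp2
    simpa using this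
  have hr1 : (1:ℝ) ≤ r := by linarith
  have hr0 : (0:ℝ) < r := by linarith
  set n : ℕ := ⌈r⌉₊ with hn
  have hrn : r ≤ n := Nat.le_ceil r
  set B : ℝ := 2 * (1 + (n ! : ℝ)) * Real.exp 1 with hB
  have hB1 : (1:ℝ) ≤ B := by
    have h1 : (1:ℝ) ≤ (n ! : ℝ) := by exact_mod_cast Nat.one_le_iff_ne_zero.2 (Nat.factorial_ne_zero n)
    have h2 := Real.add_one_le_exp 1
    nlinarith
  set q : ℝ := r / 2 with hq
  have hq1 : (1:ℝ) ≤ q := by rw [hq]; linarith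
  have hq0 : (0:ℝ) < q := by linarith
  -- core estimate on ‖g‖ ^ r
  have core : ∀ (S : Finset ℕ) (c : ℕ → ℝ),
      ‖∑ n ∈ S, c n • ψ n‖ ^ r ≤ (2*K+1) ^ r * B * (∑ n ∈ S, (c n) ^ 2) ^ (r/2) := by
    intro S c
    set g : Lp ℝ p μ := ∑ n ∈ S, c n • ψ n with hg
    set G : Finset ℕ → Lp ℝ p μ :=
      fun Λ => ∑ n ∈ S, (if n ∈ Λ then c n else -c n) • ψ n with hG
    set I : Lp ℝ p μ → ℝ≥0∞ :=
      fun h => ∫⁻ x, (‖(h : Ω → ℝ) x‖₊ : ℝ≥0∞) ^ r ∂μ with hI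
    have hImeas : ∀ h : Lp ℝ p μ, AEMeasurable (fun x => (‖(h : Ω → ℝ) x‖₊ : ℝ≥0∞) ^ r) μ :=
      fun h => (ENNReal.continuous_rpow_const.measurable).comp_aemeasurable
        (Lp.aestronglyMeasurable h).enorm
    have hnorm : ∀ h : Lp ℝ p μ, ENNReal.ofReal (‖h‖ ^ r) = I h :=
      fun h => norm_rpow_eq_lintegral hp0 hptop h
    -- step A : pow bound for each sign pattern
    have hA : ∀ Λ ∈ S.powerset, ‖g‖ ^ r ≤ (2*K+1) ^ r * ‖G Λ‖ ^ r := by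
      intro Λ hΛm
      have h1 := flip_bound ψ cf huniq K hK hunc S c Λ (Finset.mem_powerset.1 hΛm)
      have h2 : (0:ℝ) ≤ 2 * K + 1 := by linarith
      calc ‖g‖ ^ r ≤ ((2*K+1) * ‖G Λ‖) ^ r :=
            Real.rpow_le_rpow (norm_nonneg _) h1 hr0.le
        _ = (2*K+1) ^ r * ‖G Λ‖ ^ r := Real.mul_rpow h2 (norm_nonneg _)
    -- step B : sum over sign patterns
    have hB2 : (2:ℝ) ^ S.card * ‖g‖ ^ r ≤ (2*K+1) ^ r * ∑ Λ ∈ S.powerset, ‖G Λ‖ ^ r := by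
      have := Finset.sum_le_sum hA
      rw [Finset.sum_const, Finset.card_powerset] at this
      rw [← Finset.mul_sum] at this
      simpa [nsmul_eq_mul] using this
    -- step C : identify the sum with a lintegral
    have hC : ∑ Λ ∈ S.powerset, ‖G Λ‖ ^ r =
        (∑ Λ ∈ S.powerset, I (G Λ)).toReal := by
      rw [ENNReal.toReal_sum (fun Λ _ => by
        rw [← hnorm]; exact ENNReal.ofReal_ne_top)]
      refine Finset.sum_congr rfl fun Λ _ => ?_
      rw [← hnorm, ENNReal.toReal_ofReal (by positivity)]
    have hD : ∑ Λ ∈ S.powerset, I (G Λ) =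
        ∫⁻ x, ∑ Λ ∈ S.powerset, (‖(G Λ : Ω → ℝ) x‖₊ : ℝ≥0∞) ^ r ∂μ :=
      (lintegral_finset_sum' _ fun Λ _ => hImeas (G Λ)).symm
    -- step E : pointwise Khintchine
    have hE : ∀ᵐ x ∂μ, ∑ Λ ∈ S.powerset, (‖(G Λ : Ω → ℝ) x‖₊ : ℝ≥0∞) ^ r ≤
        ENNReal.ofReal B * 2 ^ S.card *
          (∑ m ∈ S, ENNReal.ofReal ((c m * (ψ m : Ω → ℝ) x) ^ 2)) ^ q := by
      have hae : ∀ᵐ x ∂μ, ∀ Λ ∈ S.powerset,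
          (G Λ : Ω → ℝ) x = ∑ m ∈ S, (if m ∈ Λ then c m else -c m) * (ψ m : Ω → ℝ) x := by
        rw [Filter.eventually_all_finset]
        intro Λ _
        have h1 := LpcoeFn_sum S (fun m => (if m ∈ Λ then c m else -c m) • ψ m)
        have h2 : ∀ᵐ x ∂μ, ∀ m ∈ S,
            (((if m ∈ Λ then c m else -c m) • ψ m : Lp ℝ p μ) : Ω → ℝ) x =
              (if m ∈ Λ then c m else -c m) * (ψ m : Ω → ℝ) x := by
          rw [Filter.eventually_all_finset]
          intro m _
          filter_upwards [Lp.coeFn_smul ((if m ∈ Λ then c m else -c m) : ℝ) (ψ m)] with x hx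
          rw [hx]; rfl
        filter_upwards [h1, h2] with x h1x h2x
        rw [hG]
        rw [h1x]
        exact Finset.sum_congr rfl h2x
      filter_upwards [hae] with x hx
      set a : ℕ → ℝ := fun m => c m * (ψ m : Ω → ℝ) x with ha
      have hsigns : ∀ Λ ∈ S.powerset, (G Λ : Ω → ℝ) x =
          ∑ m ∈ S, (if m ∈ Λ then a m else -a m) := by
        intro Λ hΛm
        rw [hx Λ hΛm]
        refine Finset.sum_congr rfl fun m _ => ?_
        by_cases h : m ∈ Λ <;> simp [h, ha, neg_mul]
      calc ∑ Λ ∈ S.powerset, (‖(G Λ : Ω → ℝ) x‖₊ : ℝ≥0∞) ^ r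
          = ENNReal.ofReal (∑ Λ ∈ S.powerset, |∑ m ∈ S, (if m ∈ Λ then a m else -a m)| ^ r) := by
            rw [ENNReal.ofReal_sum_of_nonneg (fun Λ _ => by positivity)]
            refine Finset.sum_congr rfl fun Λ hΛm => ?_
            rw [hsigns Λ hΛm, ← enorm_eq_nnnorm, ← ofReal_norm, Real.norm_eq_abs,
              ENNReal.ofReal_rpow_of_nonneg (abs_nonneg _) hr0.le]
        _ ≤ ENNReal.ofReal (B * 2 ^ S.card * (∑ m ∈ S, (a m) ^ 2) ^ (r/2)) :=
            ENNReal.ofReal_le_ofReal (khin_scaled hr1 hrn S a)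
        _ = ENNReal.ofReal B * 2 ^ S.card *
              (∑ m ∈ S, ENNReal.ofReal ((c m * (ψ m : Ω → ℝ) x) ^ 2)) ^ q := by
            rw [ENNReal.ofReal_mul (by positivity), ENNReal.ofReal_mul (by positivity)]
            congr 1
            · congr 1
              rw [ENNReal.ofReal_pow (by norm_num)]
              norm_num
            · rw [← ENNReal.ofReal_sum_of_nonneg (fun m _ => by positivity),
                ← ENNReal.ofReal_rpow_of_nonneg (by positivity) (by positivity)]
    -- step F : Minkowski
    have hF : (∫⁻ x, (∑ m ∈ S, ENNReal.ofReal ((c m * (ψ m : Ω → ℝ) x) ^ 2)) ^ q ∂μ) ≤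
        (ENNReal.ofReal (∑ m ∈ S, (c m) ^ 2)) ^ q := by
      set f : ℕ → Ω → ℝ≥0∞ := fun m x => ENNReal.ofReal ((c m * (ψ m : Ω → ℝ) x) ^ 2) with hf
      have hfm : ∀ m, AEMeasurable (f m) μ := by
        intro m
        apply ENNReal.measurable_ofReal.comp_aemeasurable
        exact (((Lp.aestronglyMeasurable (ψ m)).aemeasurable.const_mul (c m)).pow_const 2)
      have hmink := lint_minkowski q hq1 S f hfm
      have hterm : ∀ m ∈ S, (∫⁻ x, (f m x) ^ q ∂μ) ^ (1/q) ≤ ENNReal.ofReal ((c m) ^ 2) := by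
        intro m _
        have heq : ∀ x, (f m x) ^ q = (‖c m‖₊ : ℝ≥0∞) ^ r * (‖(ψ m : Ω → ℝ) x‖₊ : ℝ≥0∞) ^ r := by
          intro x
          have h1 : f m x = ((‖c m * (ψ m : Ω → ℝ) x‖₊ : ℝ≥0∞)) ^ (2:ℝ) := by
            rw [hf, ← enorm_eq_nnnorm, ← ofReal_norm, Real.norm_eq_abs,
              ENNReal.ofReal_rpow_of_nonneg (abs_nonneg _) (by norm_num : (0:ℝ) ≤ 2)]
            congr 1
            rw [show (2:ℝ) = ((2:ℕ):ℝ) by norm_num, Real.rpow_natCast, sq_abs]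
          rw [h1, ← ENNReal.rpow_mul]
          have h2 : (2:ℝ) * q = r := by rw [hq]; ring
          rw [h2, nnnorm_mul, ENNReal.coe_mul,
            ENNReal.mul_rpow_of_nonneg _ _ hr0.le]
        have hint : (∫⁻ x, (f m x) ^ q ∂μ) = (‖c m‖₊ : ℝ≥0∞) ^ r * I (ψ m) := by
          rw [lintegral_congr heq, lintegral_const_mul'' _ (hImeas (ψ m))]
        rw [hint, ENNReal.mul_rpow_of_nonneg _ _ (by positivity : (0:ℝ) ≤ 1/q),
          ← ENNReal.rpow_mul]
        have h3 : r * (1/q) = 2 := by rw [hq]; field_simp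
        rw [h3]
        have h4 : (I (ψ m)) ^ (1/q) ≤ 1 := by
          rw [← hnorm (ψ m), ← ENNReal.ofReal_rpow_of_nonneg (norm_nonneg _) hr0.le,
            ← ENNReal.rpow_mul, h3]
          refine ENNReal.rpow_le_one ?_ (by norm_num)
          exact ENNReal.ofReal_le_one.2 (hψ m)
        calc (‖c m‖₊ : ℝ≥0∞) ^ (2:ℝ) * (I (ψ m)) ^ (1/q) ≤
              (‖c m‖₊ : ℝ≥0∞) ^ (2:ℝ) * 1 := mul_le_mul_right h4 _
          _ = ENNReal.ofReal ((c m) ^ 2) := by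
              rw [mul_one, ← enorm_eq_nnnorm, ← ofReal_norm, Real.norm_eq_abs,
                ENNReal.ofReal_rpow_of_nonneg (abs_nonneg _) (by norm_num : (0:ℝ) ≤ 2)]
              congr 1
              rw [show (2:ℝ) = ((2:ℕ):ℝ) by norm_num, Real.rpow_natCast, sq_abs]
      calc (∫⁻ x, (∑ m ∈ S, f m x) ^ q ∂μ)
          = ((∫⁻ x, (∑ m ∈ S, f m x) ^ q ∂μ) ^ (1/q)) ^ q := by
            rw [← ENNReal.rpow_mul, one_div, inv_mul_cancel₀ (ne_of_gt hq0), ENNReal.rpow_one]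
        _ ≤ (∑ m ∈ S, (∫⁻ x, (f m x) ^ q ∂μ) ^ (1/q)) ^ q :=
            ENNReal.rpow_le_rpow hmink hq0.le
        _ ≤ (∑ m ∈ S, ENNReal.ofReal ((c m) ^ 2)) ^ q :=
            ENNReal.rpow_le_rpow (Finset.sum_le_sum hterm) hq0.le
        _ = (ENNReal.ofReal (∑ m ∈ S, (c m) ^ 2)) ^ q := by
            rw [ENNReal.ofReal_sum_of_nonneg (fun m _ => by positivity)]
    -- step G : assemble the lintegral bound
    have hG2 : ∑ Λ ∈ S.powerset, I (G Λ) ≤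
        ENNReal.ofReal B * 2 ^ S.card * (ENNReal.ofReal (∑ m ∈ S, (c m) ^ 2)) ^ q := by
      rw [hD]
      have hmeas2 : AEMeasurable
          (fun x => (∑ m ∈ S, ENNReal.ofReal ((c m * (ψ m : Ω → ℝ) x) ^ 2)) ^ q) μ := by
        apply (ENNReal.continuous_rpow_const.measurable).comp_aemeasurable
        apply Finset.aemeasurable_fun_sum
        intro m _
        exact ENNReal.measurable_ofReal.comp_aemeasurable
          (((Lp.aestronglyMeasurable (ψ m)).aemeasurable.const_mul (c m)).pow_const 2)
      calc ∫⁻ x, ∑ Λ ∈ S.powerset, (‖(G Λ : Ω → ℝ) x‖₊ : ℝ≥0∞) ^ r ∂μ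
          ≤ ∫⁻ x, ENNReal.ofReal B * 2 ^ S.card *
              (∑ m ∈ S, ENNReal.ofReal ((c m * (ψ m : Ω → ℝ) x) ^ 2)) ^ q ∂μ :=
            lintegral_mono_ae hE
        _ = ENNReal.ofReal B * 2 ^ S.card *
              ∫⁻ x, (∑ m ∈ S, ENNReal.ofReal ((c m * (ψ m : Ω → ℝ) x) ^ 2)) ^ q ∂μ :=
            lintegral_const_mul'' _ hmeas2
        _ ≤ ENNReal.ofReal B * 2 ^ S.card * (ENNReal.ofReal (∑ m ∈ S, (c m) ^ 2)) ^ q :=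
            mul_le_mul_right hF _
    -- step H : back to the real world
    have hfin : ENNReal.ofReal B * 2 ^ S.card * (ENNReal.ofReal (∑ m ∈ S, (c m) ^ 2)) ^ q ≠ ⊤ := by
      apply ENNReal.mul_ne_top
      apply ENNReal.mul_ne_top ENNReal.ofReal_ne_top
      · exact ENNReal.pow_ne_top (by norm_num)
      · exact ENNReal.rpow_ne_top_of_nonneg hq0.le ENNReal.ofReal_ne_top
    have htoReal : (∑ Λ ∈ S.powerset, I (G Λ)).toReal ≤
        B * 2 ^ S.card * (∑ m ∈ S, (c m) ^ 2) ^ q := by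
      have h1 := ENNReal.toReal_mono hfin hG2
      calc (∑ Λ ∈ S.powerset, I (G Λ)).toReal
          ≤ (ENNReal.ofReal B * 2 ^ S.card *
              (ENNReal.ofReal (∑ m ∈ S, (c m) ^ 2)) ^ q).toReal := h1
        _ = B * 2 ^ S.card * (∑ m ∈ S, (c m) ^ 2) ^ q := by
            rw [ENNReal.toReal_mul, ENNReal.toReal_mul, ENNReal.toReal_ofReal (by positivity),
              ← ENNReal.toReal_rpow, ENNReal.toReal_ofReal (by positivity)]
            norm_num
    have hfinal : (2:ℝ) ^ S.card * ‖g‖ ^ r ≤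
        (2*K+1) ^ r * (B * 2 ^ S.card * (∑ m ∈ S, (c m) ^ 2) ^ q) := by
      refine hB2.trans ?_
      rw [hC]
      have h2 : (0:ℝ) ≤ (2*K+1) ^ r := by positivity
      exact mul_le_mul_of_nonneg_left htoReal h2
    have h2pos : (0:ℝ) < 2 ^ S.card := by positivity
    rw [hq] at hfinal
    have hre : (2*K+1) ^ r * (B * 2 ^ S.card * (∑ m ∈ S, (c m) ^ 2) ^ (r/2)) =
        2 ^ S.card * ((2*K+1) ^ r * B * (∑ m ∈ S, (c m) ^ 2) ^ (r/2)) := by ring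
    rw [hre] at hfinal
    exact le_of_mul_le_mul_left hfinal h2pos
  -- extract the constant
  refine ⟨(2*K+1) * B, ?_, ?_⟩
  · nlinarith
  · intro S c
    set s := ∑ n ∈ S, (c n) ^ 2 with hs
    have hs0 : 0 ≤ s := Finset.sum_nonneg fun n _ => sq_nonneg _
    have hcr : ‖∑ n ∈ S, c n • ψ n‖ ^ r ≤ ((2*K+1) * B * Real.sqrt s) ^ r := by
      refine (core S c).trans ?_
      rw [Real.mul_rpow (by positivity) (Real.sqrt_nonneg _),
        Real.mul_rpow (by positivity) (by positivity)]
      have h1 : Real.sqrt s ^ r = s ^ (r/2) := by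
        rw [Real.sqrt_eq_rpow, ← Real.rpow_mul hs0]
        congr 1; ring
      rw [h1]
      have h2 : B ≤ B ^ r := by
        calc B = B ^ (1:ℝ) := (Real.rpow_one B).symm
          _ ≤ B ^ r := Real.rpow_le_rpow_of_exponent_le hB1 hr1
      have h3 : (0:ℝ) ≤ (2*K+1) ^ r := by positivity
      have h4 : (0:ℝ) ≤ s ^ (r/2) := Real.rpow_nonneg hs0 _
      have h5 := mul_le_mul_of_nonneg_right (mul_le_mul_of_nonneg_left h2 h3) h4
      nlinarith [h5]
    have := Real.rpow_le_rpow (by positivity) hcr (by positivity : (0:ℝ) ≤ 1/r)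
    rwa [← Real.rpow_mul (norm_nonneg _), ← Real.rpow_mul (by positivity),
      mul_one_div, div_self (ne_of_gt hr0), Real.rpow_one, Real.rpow_one] at this


lemma min_le_geom_mean {X Y α : ℝ} (hX : 0 ≤ X) (hY : 0 ≤ Y) (h0 : 0 ≤ α) (h1 : α ≤ 1) :
    min X Y ≤ X ^ (1 - α) * Y ^ α := by
  have hZ0 : 0 ≤ min X Y := le_min hX hY
  rcases eq_or_lt_of_le hZ0 with h | h
  · rw [← h]
    positivity
  · have e1 : min X Y = (min X Y) ^ (1 - α) * (min X Y) ^ α := by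
      rw [← Real.rpow_add h, sub_add_cancel, Real.rpow_one]
    rw [e1]
    exact mul_le_mul (Real.rpow_le_rpow hZ0 (min_le_left _ _) (by linarith))
      (Real.rpow_le_rpow hZ0 (min_le_right _ _) h0)
      (Real.rpow_nonneg hZ0 _) (Real.rpow_nonneg hX _)


end Auxiliary

/-- Let `2 ≤ p < ∞` and let `Ψ = (ψ n)` be an unconditional basis of `L_p(Ω, μ)` with
`‖ψ n‖_p ≤ 1`. Here `cf f` is the coefficient sequence of `f` (expansions are unique),
and unconditionality is expressed by the uniform boundedness of the coordinate
projections `P_Λ`. Then there is a constant `C = C(p, Ψ)` such that for every `f` with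
absolutely summable coefficients (finite `A₁`-norm), every realization of the TGA (given
by a decreasing rearrangement `e` of the coefficients), every `m ≥ 1` and `α ∈ [0,1]`:
`‖f - G_m(f, Ψ)‖_p ≤ C m^(-α/2) ‖f‖_p^(1-α) ‖f‖_{A₁(Ψ)}^α`. -/
theorem stmt7 {Ω : Type*} [MeasurableSpace Ω] (μ : Measure Ω)
    (p : ℝ≥0∞) [Fact (1 ≤ p)] (hp2 : 2 ≤ p) (hptop : p ≠ ⊤)
    (ψ : ℕ → Lp ℝ p μ) (hψ : ∀ n, ‖ψ n‖ ≤ 1)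
    (cf : Lp ℝ p μ → ℕ → ℝ)
    (hbasis : ∀ f, HasSum (fun n => cf f n • ψ n) f)
    (huniq : ∀ (g : Lp ℝ p μ) (c : ℕ → ℝ), HasSum (fun n => c n • ψ n) g → c = cf g)
    (K : ℝ) (hK : 0 < K)
    (hunc : ∀ (f : Lp ℝ p μ) (Λ : Set ℕ),
      ∃ g : Lp ℝ p μ, HasSum (fun n => Λ.indicator (cf f) n • ψ n) g ∧ ‖g‖ ≤ K * ‖f‖) :
    ∃ C > 0, ∀ f : Lp ℝ p μ, Summable (fun n => |cf f n|) →
      ∀ e : ℕ ≃ ℕ, Antitone (fun j => |cf f (e j)|) →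
      ∀ m : ℕ, 1 ≤ m → ∀ α : ℝ, 0 ≤ α → α ≤ 1 →
      ‖f - ∑ j ∈ Finset.range m, cf f (e j) • ψ (e j)‖ ≤
        C * (m : ℝ) ^ (-α / 2) * ‖f‖ ^ (1 - α) * (∑' n, |cf f n|) ^ α := by
  classical
  obtain ⟨C3, hC31, hC3⟩ := square_est hp2 hptop ψ hψ cf huniq K hK hunc
  set C : ℝ := max 1 (max K C3) with hC
  have hC0 : (0:ℝ) < C := lt_of_lt_of_le one_pos (le_max_left _ _)
  refine ⟨C, hC0, ?_⟩
  intro f hsumm e hmono m hm α hα0 hα1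
  set A : ℝ := ∑' n, |cf f n| with hA
  have hA0 : 0 ≤ A := tsum_nonneg fun n => abs_nonneg _
  set G : Lp ℝ p μ := ∑ j ∈ Finset.range m, cf f (e j) • ψ (e j) with hG
  set Λ : Set ℕ := {n | m ≤ e.symm n} with hΛ
  -- the tail has sum f - G
  have hGsum : HasSum (fun n => (Λᶜ).indicator (cf f) n • ψ n) G := by
    have hz : ∀ n ∉ (Finset.range m).image e, (Λᶜ).indicator (cf f) n • ψ n = 0 := by
      intro n hn
      have : m ≤ e.symm n := by
        by_contra hc
        push_neg at hc
        exact hn (Finset.mem_image.2 ⟨e.symm n, Finset.mem_range.2 hc, e.apply_symm_apply n⟩)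
      rw [Set.indicator_of_notMem (by simpa [hΛ] using this)]
      simp
    have h2 := hasSum_sum_of_ne_finset_zero (L := SummationFilter.unconditional _) hz
    have h3 : ∑ n ∈ (Finset.range m).image e, (Λᶜ).indicator (cf f) n • ψ n = G := by
      rw [Finset.sum_image (fun a _ b _ hab => e.injective hab)]
      refine Finset.sum_congr rfl fun j hj => ?_
      have hj' : ¬ m ≤ e.symm (e j) := by
        rw [e.symm_apply_apply]
        exact not_le.2 (Finset.mem_range.1 hj)
      rw [Set.indicator_of_mem (by simpa [hΛ] using hj')]
    rw [h3] at h2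
    exact h2
  have htail : HasSum (fun n => Λ.indicator (cf f) n • ψ n) (f - G) := by
    have h1 := (hbasis f).sub hGsum
    have h2 : (fun n => cf f n • ψ n - (Λᶜ).indicator (cf f) n • ψ n) =
        fun n => Λ.indicator (cf f) n • ψ n := by
      funext n
      by_cases hn : n ∈ Λ
      · rw [Set.indicator_of_mem hn, Set.indicator_of_notMem (by simpa using hn)]
        simp
      · rw [Set.indicator_of_notMem hn, Set.indicator_of_mem (by simpa using hn)]
        simp
    rwa [h2] at h1
  -- first bound
  have bound1 : ‖f - G‖ ≤ K * ‖f‖ := by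
    obtain ⟨g', hg'sum, hg'⟩ := hunc f Λ
    rwa [htail.unique hg'sum]
  -- second bound
  set am : ℝ := |cf f (e m)| with ham
  have ham0 : 0 ≤ am := abs_nonneg _
  have hcoefbd : ∀ n ∈ Λ, |cf f n| ≤ am := by
    intro n hn
    have h1 : m ≤ e.symm n := hn
    have h2 := hmono h1
    simpa [e.apply_symm_apply] using h2
  have bound2 : ‖f - G‖ ≤ C3 * Real.sqrt (am * A) := by
    refine le_of_tendsto' htail.tendsto_sum_nat.norm ?_
    intro t
    set T : Finset ℕ := (Finset.range t).filter (· ∈ Λ) with hT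
    have h1 : ∑ n ∈ Finset.range t, Λ.indicator (cf f) n • ψ n =
        ∑ n ∈ T, cf f n • ψ n := by
      rw [hT, Finset.sum_filter]
      refine Finset.sum_congr rfl fun n _ => ?_
      by_cases hn : n ∈ Λ
      · rw [Set.indicator_of_mem hn, if_pos hn]
      · rw [Set.indicator_of_notMem hn, if_neg hn, zero_smul]
    have h2 : ∑ n ∈ T, (cf f n) ^ 2 ≤ am * A := by
      calc ∑ n ∈ T, (cf f n) ^ 2 ≤ ∑ n ∈ T, am * |cf f n| := by
            refine Finset.sum_le_sum fun n hn => ?_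
            have hnΛ : n ∈ Λ := (Finset.mem_filter.1 hn).2
            calc (cf f n) ^ 2 = |cf f n| * |cf f n| := by rw [← sq_abs]; ring
              _ ≤ am * |cf f n| :=
                  mul_le_mul_of_nonneg_right (hcoefbd n hnΛ) (abs_nonneg _)
        _ = am * ∑ n ∈ T, |cf f n| := by rw [Finset.mul_sum]
        _ ≤ am * A :=
            mul_le_mul_of_nonneg_left (Summable.sum_le_tsum T (fun n _ => abs_nonneg _) hsumm) ham0
    calc ‖∑ n ∈ Finset.range t, Λ.indicator (cf f) n • ψ n‖
        = ‖∑ n ∈ T, cf f n • ψ n‖ := by rw [h1]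
      _ ≤ C3 * Real.sqrt (∑ n ∈ T, (cf f n) ^ 2) := hC3 T (cf f)
      _ ≤ C3 * Real.sqrt (am * A) :=
          mul_le_mul_of_nonneg_left (Real.sqrt_le_sqrt h2) (by linarith)
  -- decay of the m-th coefficient
  have hmpos : (0:ℝ) < (m:ℝ) := by exact_mod_cast hm
  have hmam : (m:ℝ) * am ≤ A := by
    calc (m:ℝ) * am = ∑ _j ∈ Finset.range m, am := by
          rw [Finset.sum_const, Finset.card_range, nsmul_eq_mul]
      _ ≤ ∑ j ∈ Finset.range m, |cf f (e j)| := by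
          refine Finset.sum_le_sum fun j hj => ?_
          exact hmono (le_of_lt (Finset.mem_range.1 hj))
      _ = ∑ n ∈ (Finset.range m).image e, |cf f n| := by
          rw [Finset.sum_image (fun a _ b _ hab => e.injective hab)]
      _ ≤ A := Summable.sum_le_tsum _ (fun n _ => abs_nonneg _) hsumm
  have bound2' : ‖f - G‖ ≤ C3 * ((m:ℝ) ^ (-(1:ℝ)/2) * A) := by
    refine bound2.trans ?_
    have h1 : am * A ≤ (A / m) * A := by
      refine mul_le_mul_of_nonneg_right ?_ hA0
      rw [le_div_iff₀ hmpos]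
      linarith [hmam]
    have h2 : Real.sqrt ((A / m) * A) = (m:ℝ) ^ (-(1:ℝ)/2) * A := by
      rw [show (A/m)*A = A^2 * ((m:ℝ))⁻¹ by ring, Real.sqrt_mul (sq_nonneg A),
        Real.sqrt_sq hA0, Real.sqrt_inv, show -(1:ℝ)/2 = -(1/2) by ring,
        Real.rpow_neg hmpos.le, ← Real.sqrt_eq_rpow]
      ring
    calc C3 * Real.sqrt (am * A) ≤ C3 * Real.sqrt ((A / m) * A) :=
          mul_le_mul_of_nonneg_left (Real.sqrt_le_sqrt h1) (by linarith)
      _ = C3 * ((m:ℝ) ^ (-(1:ℝ)/2) * A) := by rw [h2]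
  -- interpolation
  have hX0 : (0:ℝ) ≤ K * ‖f‖ := mul_nonneg hK.le (norm_nonneg f)
  have hY0 : (0:ℝ) ≤ C3 * ((m:ℝ) ^ (-(1:ℝ)/2) * A) :=
    mul_nonneg (by linarith) (mul_nonneg (Real.rpow_nonneg hmpos.le _) hA0)
  have hKC : K ≤ C := le_trans (le_max_left _ _) (le_max_right _ _)
  have hC3C : C3 ≤ C := le_trans (le_max_right _ _) (le_max_right _ _)
  have hprod : K ^ (1-α) * C3 ^ α ≤ C := by
    calc K ^ (1-α) * C3 ^ α ≤ C ^ (1-α) * C ^ α :=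
          mul_le_mul (Real.rpow_le_rpow hK.le hKC (by linarith))
            (Real.rpow_le_rpow (by linarith) hC3C hα0)
            (Real.rpow_nonneg (by linarith) _) (Real.rpow_nonneg hC0.le _)
      _ = C := by rw [← Real.rpow_add hC0, sub_add_cancel, Real.rpow_one]
  have hmexp : ((m:ℝ) ^ (-(1:ℝ)/2)) ^ α = (m:ℝ) ^ (-α/2) := by
    rw [← Real.rpow_mul hmpos.le]
    congr 1
    ring
  calc ‖f - G‖ ≤ min (K * ‖f‖) (C3 * ((m:ℝ) ^ (-(1:ℝ)/2) * A)) := le_min bound1 bound2'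
    _ ≤ (K * ‖f‖) ^ (1-α) * (C3 * ((m:ℝ) ^ (-(1:ℝ)/2) * A)) ^ α :=
        min_le_geom_mean hX0 hY0 hα0 hα1
    _ = (K ^ (1-α) * C3 ^ α) * (((m:ℝ) ^ (-(1:ℝ)/2)) ^ α * (‖f‖ ^ (1-α) * A ^ α)) := by
        rw [Real.mul_rpow hK.le (norm_nonneg f),
          Real.mul_rpow (by linarith : (0:ℝ) ≤ C3)
            (mul_nonneg (Real.rpow_nonneg hmpos.le _) hA0),
          Real.mul_rpow (Real.rpow_nonneg hmpos.le _) hA0]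
        ring
    _ ≤ C * (((m:ℝ) ^ (-(1:ℝ)/2)) ^ α * (‖f‖ ^ (1-α) * A ^ α)) :=
        mul_le_mul_of_nonneg_right hprod (by positivity)
    _ = C * (m:ℝ) ^ (-α/2) * ‖f‖ ^ (1-α) * A ^ α := by
        rw [hmexp]
        ring
end

section
/- Let $1 < p \le 2$ and let $\Psi$ be an unconditional basis of $L_p(\Omega, \mu)$ with $\|\psi_n\|_p \le 1$. Then there is a constant $C(p, \Psi)$ such that for all $f$ with finite $A_1$-norm, all $m \ge 1$, and all $\alpha \in [0,1]$: $\|f - G_m(f, \Psi)\|_p \le C(p, \Psi)\, m^{-\alpha(1-1/p)}\, \|f\|_p^{1-\alpha} \|f\|_{A_1(\Psi)}^{\alpha}$. -/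
set_option maxHeartbeats 1000000
set_option synthInstance.maxHeartbeats 400000

open Finset MeasureTheory
open scoped ENNReal NNReal


lemma clarkson_nnreal {q : ℝ} (hq1 : 1 ≤ q) (hq2 : q ≤ 2) (a b : ℝ) :
    ‖a + b‖₊ ^ q + ‖a - b‖₊ ^ q ≤ 2 * (‖a‖₊ ^ q + ‖b‖₊ ^ q) := by
  have hq0 : 0 < q := lt_of_lt_of_le one_pos hq1
  set u := ‖a + b‖₊
  set v := ‖a - b‖₊
  set x := ‖a‖₊
  set y := ‖b‖₊
  have hsq : u ^ (2:ℝ) + v ^ (2:ℝ) = 2 * (x ^ (2:ℝ) + y ^ (2:ℝ)) := by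
    have : ∀ z : ℝ≥0, z ^ (2:ℝ) = z * z := by
      intro z
      rw [show (2:ℝ) = ((2:ℕ):ℝ) by norm_num, NNReal.rpow_natCast, sq]
    simp only [this]
    apply NNReal.coe_injective
    push_cast [u, v, x, y]
    simp only [Real.norm_eq_abs, abs_mul_abs_self]
    ring
  -- step 1 : (u^q + v^q)^(2/q) ≤ 2^(2/q - 1) * (u^2 + v^2)
  have h1 : (u ^ q + v ^ q) ^ ((2:ℝ)/q) ≤ 2 ^ ((2:ℝ)/q - 1) * (u ^ (2:ℝ) + v ^ (2:ℝ)) := by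
    have := NNReal.rpow_add_le_mul_rpow_add_rpow (u ^ q) (v ^ q) (p := (2:ℝ)/q)
      ((one_le_div hq0).mpr hq2)
    rwa [← NNReal.rpow_mul, ← NNReal.rpow_mul, mul_div_cancel₀ _ hq0.ne'] at this
  -- step 3 : (x^2 + y^2)^(q/2) ≤ x^q + y^q
  have h3 : (x ^ (2:ℝ) + y ^ (2:ℝ)) ^ (q/2) ≤ x ^ q + y ^ q := by
    have h := NNReal.rpow_add_rpow_le x y hq0 hq2
    have h' := NNReal.rpow_le_rpow h (le_of_lt hq0)
    rw [← NNReal.rpow_mul, ← NNReal.rpow_mul, one_div, one_div,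
      show (2:ℝ)⁻¹ * q = q / 2 by ring, inv_mul_cancel₀ hq0.ne', NNReal.rpow_one] at h'
    exact h'
  calc u ^ q + v ^ q = ((u ^ q + v ^ q) ^ ((2:ℝ)/q)) ^ (q/2) := by
        rw [← NNReal.rpow_mul]
        rw [show (2:ℝ)/q * (q/2) = 1 by field_simp, NNReal.rpow_one]
    _ ≤ (2 ^ ((2:ℝ)/q - 1) * (2 * (x ^ (2:ℝ) + y ^ (2:ℝ)))) ^ (q/2) := by
        apply NNReal.rpow_le_rpow _ (by positivity)
        rw [← hsq]; exact h1
    _ = 2 * (x ^ (2:ℝ) + y ^ (2:ℝ)) ^ (q/2) := by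
        have h2 : (2 : ℝ≥0) ^ ((2:ℝ)/q - 1) * 2 = 2 ^ ((2:ℝ)/q) := by
          nth_rewrite 2 [show (2:ℝ≥0) = (2:ℝ≥0) ^ (1:ℝ) by rw [NNReal.rpow_one]]
          rw [← NNReal.rpow_add two_ne_zero]; norm_num
        rw [← mul_assoc, h2, NNReal.mul_rpow, ← NNReal.rpow_mul,
          show (2:ℝ)/q * (q/2) = 1 by field_simp, NNReal.rpow_one]
    _ ≤ 2 * (x ^ q + y ^ q) := by exact mul_le_mul_right h3 2

section
variable {Ω : Type*} [MeasurableSpace Ω] {μ : Measure Ω} {p : ℝ≥0∞} [Fact (1 ≤ p)]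
variable {Ω : Type*} [MeasurableSpace Ω] {μ : Measure Ω} {p : ℝ≥0∞} [Fact (1 ≤ p)]

lemma lp_norm_q (hp0 : p ≠ 0) (hptop : p ≠ ∞) (h : Lp ℝ p μ) :
    ‖h‖ ^ p.toReal = (∫⁻ x, (‖h x‖₊ : ℝ≥0∞) ^ p.toReal ∂μ).toReal := by
  have hq0 : 0 < p.toReal := ENNReal.toReal_pos hp0 hptop
  rw [Lp.norm_def, eLpNorm_eq_lintegral_rpow_enorm_toReal hp0 hptop]
  simp only [enorm_eq_nnnorm]
  rw [ENNReal.toReal_rpow,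
    ← ENNReal.rpow_mul, one_div, inv_mul_cancel₀ hq0.ne', ENNReal.rpow_one]

lemma lp_ne_top (hp0 : p ≠ 0) (hptop : p ≠ ∞) (h : Lp ℝ p μ) :
    (∫⁻ x, (‖h x‖₊ : ℝ≥0∞) ^ p.toReal ∂μ) ≠ ∞ := by
  have hq0 : 0 < p.toReal := ENNReal.toReal_pos hp0 hptop
  have := Lp.eLpNorm_ne_top h
  rw [eLpNorm_eq_lintegral_rpow_enorm_toReal hp0 hptop] at this
  simp only [enorm_eq_nnnorm] at this
  intro hcon
  rw [hcon] at this
  simp only [hcon, ENNReal.top_rpow_of_pos (by positivity : (0:ℝ) < 1 / p.toReal), ne_eq,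
    not_true_eq_false] at this
lemma clarkson_Lp (hp1 : 1 ≤ p) (hp2 : p ≤ 2) (hptop : p ≠ ∞) (f g : Lp ℝ p μ) :
    ‖f + g‖ ^ p.toReal + ‖f - g‖ ^ p.toReal ≤
      2 * (‖f‖ ^ p.toReal + ‖g‖ ^ p.toReal) := by
  have hp0 : p ≠ 0 := by positivity
  set q := p.toReal with hq
  have hq1 : 1 ≤ q := by
    rw [hq, ← ENNReal.toReal_one]
    exact ENNReal.toReal_mono hptop hp1
  have hq2 : q ≤ 2 := by
    rw [hq, show (2:ℝ) = (2:ℝ≥0∞).toReal by simp]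
    exact ENNReal.toReal_mono (by norm_num) hp2
  set N : Lp ℝ p μ → ℝ≥0∞ := fun h => ∫⁻ x, (‖h x‖₊ : ℝ≥0∞) ^ q ∂μ with hN
  have hm : ∀ h : Lp ℝ p μ, Measurable fun x => (‖h x‖₊ : ℝ≥0∞) ^ q := fun h =>
    ((Lp.stronglyMeasurable h).measurable.nnnorm.coe_nnreal_ennreal).pow_const _
  have key : N (f + g) + N (f - g) ≤ 2 * (N f + N g) := by
    rw [hN]
    simp only
    rw [← lintegral_add_left (hm _)]
    have h2 : (2 : ℝ≥0∞) * (∫⁻ x, (‖f x‖₊ : ℝ≥0∞) ^ q ∂μ + ∫⁻ x, (‖g x‖₊ : ℝ≥0∞) ^ q ∂μ)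
        = ∫⁻ x, 2 * ((‖f x‖₊ : ℝ≥0∞) ^ q + (‖g x‖₊ : ℝ≥0∞) ^ q) ∂μ := by
      rw [← lintegral_add_left (hm _), lintegral_const_mul (f := fun x => (‖f x‖₊ : ℝ≥0∞) ^ q + (‖g x‖₊ : ℝ≥0∞) ^ q) _ ((hm _).add (hm _))]
    rw [h2]
    apply lintegral_mono_ae
    filter_upwards [Lp.coeFn_add f g, Lp.coeFn_sub f g] with x hadd hsub
    rw [hadd, hsub]
    simp only [Pi.add_apply, Pi.sub_apply]
    have := clarkson_nnreal hq1 hq2 (f x) (g x)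
    calc (‖f x + g x‖₊ : ℝ≥0∞) ^ q + (‖f x - g x‖₊ : ℝ≥0∞) ^ q
        = ((‖f x + g x‖₊ ^ q + ‖f x - g x‖₊ ^ q : ℝ≥0) : ℝ≥0∞) := by
          rw [ENNReal.coe_add, ENNReal.coe_rpow_of_nonneg _ (by positivity),
            ENNReal.coe_rpow_of_nonneg _ (by positivity)]
      _ ≤ ((2 * (‖f x‖₊ ^ q + ‖g x‖₊ ^ q) : ℝ≥0) : ℝ≥0∞) := ENNReal.coe_le_coe.mpr this
      _ = 2 * ((‖f x‖₊ : ℝ≥0∞) ^ q + (‖g x‖₊ : ℝ≥0∞) ^ q) := by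
          push_cast [ENNReal.coe_rpow_of_nonneg _ (by positivity : (0:ℝ) ≤ q)]
          ring
  have hfin : ∀ h : Lp ℝ p μ, N h ≠ ∞ := fun h => lp_ne_top hp0 hptop h
  have hnorm : ∀ h : Lp ℝ p μ, ‖h‖ ^ q = (N h).toReal := fun h => lp_norm_q hp0 hptop h
  rw [hnorm, hnorm, hnorm, hnorm, ← ENNReal.toReal_add (hfin _) (hfin _),
    ← ENNReal.toReal_add (hfin _) (hfin _), ← ENNReal.toReal_ofNat (n := 2),
    ← ENNReal.toReal_mul]
  exact ENNReal.toReal_mono (by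
      apply ENNReal.mul_ne_top (by norm_num)
      exact ENNReal.add_ne_top.mpr ⟨hfin _, hfin _⟩) key
end


lemma sign_avg {E : Type*} [NormedAddCommGroup E] [NormedSpace ℝ E] {q : ℝ} (hq : 1 ≤ q)
    (hcl : ∀ f g : E, ‖f + g‖ ^ q + ‖f - g‖ ^ q ≤ 2 * (‖f‖ ^ q + ‖g‖ ^ q))
    (a : ℕ → E) (S : Finset ℕ) :
    ∃ ε : ℕ → ℝ, (∀ n, ε n = 1 ∨ ε n = -1) ∧
      ‖∑ n ∈ S, ε n • a n‖ ^ q ≤ ∑ n ∈ S, ‖a n‖ ^ q := by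
  have hq0 : (0:ℝ) < q := lt_of_lt_of_le one_pos hq
  induction S using Finset.induction with
  | empty =>
    exact ⟨fun _ => 1, fun _ => Or.inl rfl,
      by simp [Real.zero_rpow hq0.ne']⟩
  | @insert j S' hj ih =>
    obtain ⟨ε, hε, hle⟩ := ih
    set h := ∑ n ∈ S', ε n • a n with hh
    have hkey := hcl h (a j)
    have hupd : ∀ s : ℝ, ∑ n ∈ insert j S', (Function.update ε j s) n • a n
        = s • a j + h := by
      intro s
      rw [Finset.sum_insert hj, Function.update_self, hh]
      congr 1
      exact Finset.sum_congr rfl fun n hn => by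
        rw [Function.update_of_ne (by rintro rfl; exact hj hn)]
    rcases le_total ‖h + a j‖ ‖h - a j‖ with hc | hc
    · refine ⟨Function.update ε j 1, ?_, ?_⟩
      · intro n
        rcases eq_or_ne n j with rfl | hn
        · simp
        · simpa [Function.update_of_ne hn] using hε n
      · rw [hupd, one_smul, Finset.sum_insert hj]
        have h1 : ‖h + a j‖ ^ q ≤ ‖h - a j‖ ^ q :=
          Real.rpow_le_rpow (norm_nonneg _) hc hq0.le
        have : ‖h + a j‖ ^ q ≤ ‖h‖ ^ q + ‖a j‖ ^ q := by linarith
        calc ‖a j + h‖ ^ q = ‖h + a j‖ ^ q := by rw [add_comm]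
          _ ≤ ‖h‖ ^ q + ‖a j‖ ^ q := this
          _ ≤ ‖a j‖ ^ q + ∑ n ∈ S', ‖a n‖ ^ q := by linarith
    · refine ⟨Function.update ε j (-1), ?_, ?_⟩
      · intro n
        rcases eq_or_ne n j with rfl | hn
        · simp
        · simpa [Function.update_of_ne hn] using hε n
      · rw [hupd, Finset.sum_insert hj]
        have h1 : ‖h - a j‖ ^ q ≤ ‖h + a j‖ ^ q :=
          Real.rpow_le_rpow (norm_nonneg _) hc hq0.le
        have h2 : ‖h - a j‖ ^ q ≤ ‖h‖ ^ q + ‖a j‖ ^ q := by linarith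
        calc ‖(-1:ℝ) • a j + h‖ ^ q = ‖h - a j‖ ^ q := by
              rw [neg_one_smul, add_comm, ← sub_eq_add_neg]
          _ ≤ ‖h‖ ^ q + ‖a j‖ ^ q := h2
          _ ≤ ‖a j‖ ^ q + ∑ n ∈ S', ‖a n‖ ^ q := by linarith

/-- Let `1 < p ≤ 2` and let `Ψ = (ψ n)` be an unconditional basis of `L_p(Ω, μ)` with
`‖ψ n‖_p ≤ 1`. Here `cf f` is the coefficient sequence of `f` (expansions are unique),
and unconditionality is expressed by the uniform boundedness of the coordinate
projections `P_Λ`. Then there is a constant `C = C(p, Ψ)` such that for every `f` with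
absolutely summable coefficients (finite `A₁`-norm), every realization of the TGA (given
by a decreasing rearrangement `e` of the coefficients), every `m ≥ 1` and `α ∈ [0,1]`:
`‖f - G_m(f, Ψ)‖_p ≤ C m^(-α(1-1/p)) ‖f‖_p^(1-α) ‖f‖_{A₁(Ψ)}^α`. -/
theorem stmt8 {Ω : Type*} [MeasurableSpace Ω] (μ : Measure Ω)
    (p : ℝ≥0∞) [Fact (1 ≤ p)] (hp1 : 1 < p) (hp2 : p ≤ 2)
    (ψ : ℕ → Lp ℝ p μ) (hψ : ∀ n, ‖ψ n‖ ≤ 1)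
    (cf : Lp ℝ p μ → ℕ → ℝ)
    (hbasis : ∀ f, HasSum (fun n => cf f n • ψ n) f)
    (huniq : ∀ (g : Lp ℝ p μ) (c : ℕ → ℝ), HasSum (fun n => c n • ψ n) g → c = cf g)
    (K : ℝ) (hK : 0 < K)
    (hunc : ∀ (f : Lp ℝ p μ) (Λ : Set ℕ),
      ∃ g : Lp ℝ p μ, HasSum (fun n => Λ.indicator (cf f) n • ψ n) g ∧ ‖g‖ ≤ K * ‖f‖) :
    ∃ C > 0, ∀ f : Lp ℝ p μ, Summable (fun n => |cf f n|) →
      ∀ e : ℕ ≃ ℕ, Antitone (fun j => |cf f (e j)|) →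
      ∀ m : ℕ, 1 ≤ m → ∀ α : ℝ, 0 ≤ α → α ≤ 1 →
      ‖f - ∑ j ∈ Finset.range m, cf f (e j) • ψ (e j)‖ ≤
        C * (m : ℝ) ^ (-(α * (1 - 1 / p.toReal))) * ‖f‖ ^ (1 - α) * (∑' n, |cf f n|) ^ α := by
  have hptop : p ≠ ∞ := (lt_of_le_of_lt hp2 (by norm_num)).ne
  set q := p.toReal with hqdef
  have hq1 : 1 < q := by
    rw [hqdef, ← ENNReal.toReal_one]
    exact (ENNReal.toReal_lt_toReal (by norm_num) hptop).mpr hp1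
  have hq0 : (0:ℝ) < q := lt_trans one_pos hq1
  have hq2 : q ≤ 2 := by
    rw [hqdef, show (2:ℝ) = (2:ℝ≥0∞).toReal by simp]
    exact ENNReal.toReal_mono (by norm_num) hp2
  have hcl : ∀ f g : Lp ℝ p μ, ‖f + g‖ ^ q + ‖f - g‖ ^ q ≤ 2 * (‖f‖ ^ q + ‖g‖ ^ q) :=
    fun f g => clarkson_Lp hp1.le hp2 hptop f g
  -- finite sums realize indicator coefficients
  have hfinsum : ∀ (S : Finset ℕ) (c : ℕ → ℝ),
      HasSum (fun n => (if n ∈ S then c n else 0) • ψ n) (∑ n ∈ S, c n • ψ n) := by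
    intro S c
    have h := hasSum_sum_of_ne_finset_zero (L := SummationFilter.unconditional ℕ) (s := S)
      (f := fun n => (if n ∈ S then c n else 0) • ψ n) (by intro b hb; simp [hb])
    have heq : ∑ n ∈ S, (if n ∈ S then c n else 0) • ψ n = ∑ n ∈ S, c n • ψ n :=
      Finset.sum_congr rfl fun n hn => by rw [if_pos hn]
    rwa [heq] at h
  -- Lemma A : sign flips of finite sums
  have lemA : ∀ (S : Finset ℕ) (c ε : ℕ → ℝ), (∀ n, ε n = 1 ∨ ε n = -1) →
      ‖∑ n ∈ S, c n • ψ n‖ ≤ 2 * K * ‖∑ n ∈ S, (ε n * c n) • ψ n‖ := by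
    intro S c ε hε
    classical
    set gε := ∑ n ∈ S, (ε n * c n) • ψ n with hgε
    have hd : HasSum (fun n => (if n ∈ S then ε n * c n else 0) • ψ n) gε := hfinsum S _
    have hcfg : (fun n => if n ∈ S then ε n * c n else 0) = cf gε := huniq _ _ hd
    -- positive part
    obtain ⟨g₁, hg₁, hg₁le⟩ := hunc gε {n | n ∈ S ∧ ε n = 1}
    have hg₁' : HasSum (fun n => (if n ∈ S.filter (fun n => ε n = 1) then c n else 0) • ψ n) g₁ := by
      have : (fun n => Set.indicator {n | n ∈ S ∧ ε n = 1} (cf gε) n • ψ n)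
          = fun n => (if n ∈ S.filter (fun n => ε n = 1) then c n else 0) • ψ n := by
        funext n
        rw [← hcfg, Set.indicator_apply]
        by_cases hn : n ∈ S ∧ ε n = 1
        · rw [if_pos (show n ∈ {n | n ∈ S ∧ ε n = 1} from hn), if_pos hn.1,
            if_pos (Finset.mem_filter.mpr hn), hn.2, one_mul]
        · rw [if_neg (show n ∉ {n | n ∈ S ∧ ε n = 1} from hn),
            if_neg (fun hc => hn (Finset.mem_filter.mp hc))]
      rwa [this] at hg₁
    have hg₁eq : g₁ = ∑ n ∈ S.filter (fun n => ε n = 1), c n • ψ n :=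
      hg₁'.unique (hfinsum _ _)
    -- negative part
    obtain ⟨g₂, hg₂, hg₂le⟩ := hunc gε {n | n ∈ S ∧ ε n = -1}
    have hg₂' : HasSum
        (fun n => (if n ∈ S.filter (fun n => ε n = -1) then -(c n) else 0) • ψ n) g₂ := by
      have : (fun n => Set.indicator {n | n ∈ S ∧ ε n = -1} (cf gε) n • ψ n)
          = fun n => (if n ∈ S.filter (fun n => ε n = -1) then -(c n) else 0) • ψ n := by
        funext n
        rw [← hcfg, Set.indicator_apply]
        by_cases hn : n ∈ S ∧ ε n = -1
        · rw [if_pos (show n ∈ {n | n ∈ S ∧ ε n = -1} from hn), if_pos hn.1,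
            if_pos (Finset.mem_filter.mpr hn), hn.2, neg_one_mul]
        · rw [if_neg (show n ∉ {n | n ∈ S ∧ ε n = -1} from hn),
            if_neg (fun hc => hn (Finset.mem_filter.mp hc))]
      rwa [this] at hg₂
    have hg₂eq : g₂ = ∑ n ∈ S.filter (fun n => ε n = -1), -(c n) • ψ n := by
      have := hg₂'.unique (hfinsum _ (fun n => -(c n)))
      simpa using this
    -- partition
    have hsplit : ∑ n ∈ S, c n • ψ n = g₁ - g₂ := by
      rw [hg₁eq, hg₂eq]
      rw [← Finset.sum_filter_add_sum_filter_not S (fun n => ε n = 1) (fun n => c n • ψ n)]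
      have hfeq : S.filter (fun n => ¬ ε n = 1) = S.filter (fun n => ε n = -1) := by
        apply Finset.filter_congr
        intro n _
        constructor
        · intro h1
          rcases hε n with h | h
          · exact absurd h h1
          · simpa using h
        · intro h1
          rw [h1]; norm_num
      rw [hfeq]
      simp only [neg_smul, Finset.sum_neg_distrib]
      abel
    rw [hsplit]
    calc ‖g₁ - g₂‖ ≤ ‖g₁‖ + ‖g₂‖ := norm_sub_le _ _
      _ ≤ K * ‖gε‖ + K * ‖gε‖ := add_le_add hg₁le hg₂le
      _ = 2 * K * ‖gε‖ := by ring
  -- Lemma B : upper q-estimate for finite sums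
  have lemB : ∀ (S : Finset ℕ) (c : ℕ → ℝ),
      ‖∑ n ∈ S, c n • ψ n‖ ≤ 2 * K * (∑ n ∈ S, |c n| ^ q) ^ (1/q) := by
    intro S c
    obtain ⟨ε, hε, hle⟩ := sign_avg hq1.le hcl (fun n => c n • ψ n) S
    have hsum_eq : ∑ n ∈ S, ε n • (c n • ψ n) = ∑ n ∈ S, (ε n * c n) • ψ n :=
      Finset.sum_congr rfl fun n _ => smul_smul _ _ _
    rw [hsum_eq] at hle
    have h2 : ∑ n ∈ S, ‖c n • ψ n‖ ^ q ≤ ∑ n ∈ S, |c n| ^ q := by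
      apply Finset.sum_le_sum
      intro n _
      apply Real.rpow_le_rpow (norm_nonneg _) _ hq0.le
      rw [norm_smul, Real.norm_eq_abs]
      calc |c n| * ‖ψ n‖ ≤ |c n| * 1 := mul_le_mul_of_nonneg_left (hψ n) (abs_nonneg _)
        _ = |c n| := mul_one _
    have h3 : ‖∑ n ∈ S, (ε n * c n) • ψ n‖ ≤ (∑ n ∈ S, |c n| ^ q) ^ (1/q) := by
      have hnn : (0:ℝ) ≤ ‖∑ n ∈ S, (ε n * c n) • ψ n‖ := norm_nonneg _
      have h4 := Real.rpow_le_rpow (by positivity) (le_trans hle h2)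
        (by positivity : (0:ℝ) ≤ 1/q)
      rwa [← Real.rpow_mul hnn, mul_one_div_cancel hq0.ne', Real.rpow_one] at h4
    calc ‖∑ n ∈ S, c n • ψ n‖ ≤ 2 * K * ‖∑ n ∈ S, (ε n * c n) • ψ n‖ := lemA S c ε hε
      _ ≤ 2 * K * (∑ n ∈ S, |c n| ^ q) ^ (1/q) :=
          mul_le_mul_of_nonneg_left h3 (by positivity)
  -- Lemma C : limit version
  have lemC : ∀ (c'' : ℕ → ℝ) (g : Lp ℝ p μ) (B : ℝ),
      HasSum (fun n => c'' n • ψ n) g → (∀ S : Finset ℕ, ∑ n ∈ S, |c'' n| ^ q ≤ B) →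
      ‖g‖ ≤ 2 * K * B ^ (1/q) := by
    intro c'' g B hg hB
    have hlim : Filter.Tendsto (fun S : Finset ℕ => ‖∑ n ∈ S, c'' n • ψ n‖)
        Filter.atTop (nhds ‖g‖) := Filter.Tendsto.norm hg
    apply le_of_tendsto' hlim
    intro S
    calc ‖∑ n ∈ S, c'' n • ψ n‖ ≤ 2 * K * (∑ n ∈ S, |c'' n| ^ q) ^ (1/q) := lemB S c''
      _ ≤ 2 * K * B ^ (1/q) :=
          mul_le_mul_of_nonneg_left
            (Real.rpow_le_rpow (by positivity) (hB S) (by positivity)) (by positivity)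
  -- main argument
  refine ⟨2 * K, by positivity, ?_⟩
  intro f hsum e he m hm α hα0 hα1
  classical
  set c := cf f with hc
  set A1 := ∑' n, |c n| with hA1
  have hA1nn : 0 ≤ A1 := tsum_nonneg fun n => abs_nonneg _
  have hmpos : (0:ℝ) < m := by exact_mod_cast hm
  set T : Finset ℕ := (Finset.range m).image e with hT
  set G := ∑ j ∈ Finset.range m, c (e j) • ψ (e j) with hG
  have hGT : G = ∑ n ∈ T, c n • ψ n := by
    rw [hG, hT, Finset.sum_image (fun x _ y _ h => e.injective h)]
  set c' : ℕ → ℝ := fun n => if n ∈ T then 0 else c n with hc'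
  have ht : HasSum (fun n => c' n • ψ n) (f - G) := by
    have h1 : HasSum (fun n => (if n ∈ T then c n else 0) • ψ n) G := by
      rw [hGT]; exact hfinsum T c
    have h2 := (hbasis f).sub h1
    have heq : (fun n => cf f n • ψ n - (if n ∈ T then c n else 0) • ψ n)
        = fun n => c' n • ψ n := by
      funext n
      rw [← sub_smul, hc']
      congr 1
      by_cases hn : n ∈ T <;> simp [hn, hc]
    rwa [heq] at h2
  -- endpoint bound B0
  have hB0 : ‖f - G‖ ≤ K * ‖f‖ := by
    obtain ⟨g, hgsum, hgle⟩ := hunc f ((↑T : Set ℕ)ᶜ)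
    have heq : (fun n => Set.indicator ((↑T : Set ℕ)ᶜ) (cf f) n • ψ n)
        = fun n => c' n • ψ n := by
      funext n
      by_cases hn : n ∈ T
      · rw [Set.indicator_apply, if_neg (by simpa using hn)]
        simp [hc', hn]
      · rw [Set.indicator_apply, if_pos (by simpa using hn)]
        simp [hc', hn, hc]
    rw [heq] at hgsum
    rw [ht.unique hgsum]
    exact hgle
  -- coefficient size bounds
  have hTsum : ∑ j ∈ Finset.range m, |c (e j)| ≤ A1 := by
    have : ∑ j ∈ Finset.range m, |c (e j)| = ∑ n ∈ T, |c n| := by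
      rw [hT, Finset.sum_image (fun x _ y _ h => e.injective h)]
    rw [this, hA1]
    exact Summable.sum_le_tsum T (fun n _ => abs_nonneg _) hsum
  have hem : |c (e m)| ≤ A1 / m := by
    rw [le_div_iff₀ hmpos]
    have h1 : |c (e m)| * m = ∑ _j ∈ Finset.range m, |c (e m)| := by
      rw [Finset.sum_const, Finset.card_range, nsmul_eq_mul, mul_comm]
    rw [h1]
    calc ∑ _j ∈ Finset.range m, |c (e m)| ≤ ∑ j ∈ Finset.range m, |c (e j)| :=
          Finset.sum_le_sum fun j hj => he (le_of_lt (Finset.mem_range.mp hj))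
      _ ≤ A1 := hTsum
  have hA1m : 0 ≤ A1 / m := le_trans (abs_nonneg _) hem
  have hc'le : ∀ n, |c' n| ≤ A1 / m := by
    intro n
    rw [hc']
    by_cases hn : n ∈ T
    · simpa [hn] using hA1m
    · simp only [hn, if_false]
      have hjm : m ≤ e.symm n := by
        by_contra hcon
        push_neg at hcon
        exact hn (hT ▸ Finset.mem_image.mpr
          ⟨e.symm n, Finset.mem_range.mpr hcon, e.apply_symm_apply n⟩)
      calc |c n| = |c (e (e.symm n))| := by rw [e.apply_symm_apply]
        _ ≤ |c (e m)| := he hjm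
        _ ≤ A1 / m := hem
  have hc'abs : ∀ n, |c' n| ≤ |c n| := by
    intro n
    rw [hc']
    by_cases hn : n ∈ T <;> simp [hn, abs_nonneg]
  have hxq : ∀ x : ℝ, 0 < x → x ^ (q - 1) * x = x ^ q := by
    intro x hx
    nth_rewrite 2 [← Real.rpow_one x]
    rw [← Real.rpow_add hx]
    norm_num
  have hSsum : ∀ S : Finset ℕ, ∑ n ∈ S, |c' n| ^ q ≤ (A1 / m) ^ (q - 1) * A1 := by
    intro S
    have step1 : ∀ n, |c' n| ^ q ≤ (A1 / m) ^ (q - 1) * |c' n| := by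
      intro n
      have hx : (0:ℝ) ≤ |c' n| := abs_nonneg _
      have hsplit : |c' n| ^ q = |c' n| ^ (q - 1) * |c' n| := by
        rcases hx.eq_or_lt with h0 | h0
        · rw [← h0, Real.zero_rpow hq0.ne', Real.zero_rpow (by linarith), mul_zero]
        · rw [hxq _ h0]
      rw [hsplit]
      exact mul_le_mul_of_nonneg_right
        (Real.rpow_le_rpow hx (hc'le n) (by linarith)) hx
    calc ∑ n ∈ S, |c' n| ^ q ≤ ∑ n ∈ S, (A1 / m) ^ (q - 1) * |c' n| :=
          Finset.sum_le_sum fun n _ => step1 n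
      _ = (A1 / m) ^ (q - 1) * ∑ n ∈ S, |c' n| := by rw [Finset.mul_sum]
      _ ≤ (A1 / m) ^ (q - 1) * A1 := by
          apply mul_le_mul_of_nonneg_left _ (Real.rpow_nonneg hA1m _)
          calc ∑ n ∈ S, |c' n| ≤ ∑ n ∈ S, |c n| :=
                Finset.sum_le_sum fun n _ => hc'abs n
            _ ≤ A1 := Summable.sum_le_tsum S (fun n _ => abs_nonneg _) hsum
  -- endpoint bound B1
  have hB1 : ‖f - G‖ ≤ 2 * K * ((A1 / m) ^ (q - 1) * A1) ^ (1/q) :=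
    lemC c' (f - G) _ ht hSsum
  have hB1' : ‖f - G‖ ≤ 2 * K * (A1 * (m:ℝ) ^ (-(1 - 1/q))) := by
    refine le_trans hB1 ?_
    apply mul_le_mul_of_nonneg_left _ (by positivity)
    rcases hA1nn.eq_or_lt with h0 | h0
    · rw [← h0]
      rw [zero_div, Real.zero_rpow (by linarith : q - 1 ≠ 0), zero_mul,
        Real.zero_rpow (by positivity : 1/q ≠ 0), zero_mul]
    · apply le_of_eq
      have e1 : (A1 / m) ^ (q - 1) * A1 = A1 ^ q * (m:ℝ) ^ ((-1) * (q - 1)) := by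
        rw [div_eq_mul_inv, ← Real.rpow_neg_one (m:ℝ), Real.mul_rpow h0.le (by positivity),
          ← Real.rpow_mul hmpos.le, mul_right_comm, hxq _ h0]
      rw [e1, Real.mul_rpow (by positivity) (by positivity),
        ← Real.rpow_mul h0.le, mul_one_div_cancel hq0.ne', Real.rpow_one,
        ← Real.rpow_mul hmpos.le]
      congr 1
      field_simp
  -- interpolation
  set t := ‖f - G‖ with htdef
  have htnn : 0 ≤ t := norm_nonneg _
  have hRHSnn : 0 ≤ 2 * K * (m:ℝ) ^ (-(α * (1 - 1/q))) * ‖f‖ ^ (1 - α) * A1 ^ α := by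
    apply mul_nonneg
    apply mul_nonneg
    apply mul_nonneg (by positivity) (Real.rpow_nonneg (Nat.cast_nonneg m) _)
    · exact Real.rpow_nonneg (norm_nonneg f) _
    · exact Real.rpow_nonneg hA1nn _
  rcases htnn.eq_or_lt with h0 | h0
  · exact h0 ▸ hRHSnn
  · have key : t ≤ (K * ‖f‖) ^ (1 - α) * (2 * K * (A1 * (m:ℝ) ^ (-(1 - 1/q)))) ^ α := by
      have ht1 : t = t ^ (1 - α) * t ^ α := by
        rw [← Real.rpow_add h0]
        norm_num
      rw [ht1]
      exact mul_le_mul (Real.rpow_le_rpow htnn hB0 (by linarith))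
        (Real.rpow_le_rpow htnn hB1' hα0) (Real.rpow_nonneg htnn α)
        (Real.rpow_nonneg (by positivity) _)
    refine le_trans key ?_
    have hM : (0:ℝ) ≤ (m:ℝ) ^ (-(1 - 1/q)) := Real.rpow_nonneg hmpos.le _
    rw [Real.mul_rpow hK.le (norm_nonneg f),
        Real.mul_rpow (by positivity) (mul_nonneg hA1nn hM),
        Real.mul_rpow hA1nn hM,
        ← Real.rpow_mul (Nat.cast_nonneg m)]
    have hexp : (-(1 - 1/q)) * α = -(α * (1 - 1/q)) := by ring
    rw [hexp]
    have hconst : K ^ (1 - α) * (2 * K) ^ α ≤ 2 * K := by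
      rw [Real.mul_rpow (by norm_num : (0:ℝ) ≤ 2) hK.le]
      calc K ^ (1 - α) * (2 ^ α * K ^ α) = 2 ^ α * (K ^ (1 - α) * K ^ α) := by ring
        _ = 2 ^ α * K := by
            rw [← Real.rpow_add hK]
            norm_num
        _ ≤ 2 * K := by
            apply mul_le_mul_of_nonneg_right _ hK.le
            calc (2:ℝ) ^ α ≤ 2 ^ (1:ℝ) := Real.rpow_le_rpow_of_exponent_le one_le_two hα1
              _ = 2 := Real.rpow_one 2
    calc K ^ (1 - α) * ‖f‖ ^ (1 - α) * ((2 * K) ^ α * (A1 ^ α * (m:ℝ) ^ (-(α * (1 - 1/q)))))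
        = (K ^ (1 - α) * (2 * K) ^ α) * ((m:ℝ) ^ (-(α * (1 - 1/q))) * ‖f‖ ^ (1 - α) * A1 ^ α) := by
          ring
      _ ≤ (2 * K) * ((m:ℝ) ^ (-(α * (1 - 1/q))) * ‖f‖ ^ (1 - α) * A1 ^ α) := by
          apply mul_le_mul_of_nonneg_right hconst
          exact mul_nonneg (mul_nonneg (Real.rpow_nonneg (Nat.cast_nonneg m) _)
            (Real.rpow_nonneg (norm_nonneg f) _)) (Real.rpow_nonneg hA1nn _)
      _ = 2 * K * (m:ℝ) ^ (-(α * (1 - 1/q))) * ‖f‖ ^ (1 - α) * A1 ^ α := by ring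
end
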